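/- arXiv:1708.04203 — 5 statements merged into one kernel-verified Lean document; each statement's English description precedes it below -/
import Mathlib

section
/- Let b₁, …, bₙ be open half-planes in ℝ² whose union is all of ℝ². Then there exist three of them whose union is already all of ℝ². -/
open scoped RealInnerProductSpace

/-- If open half-planes `{x | ⟪a i, x⟫ < c i}` in ℝ² cover the plane,
then three of them already cover the plane. -/
theorem three_halfplanes_cover (n : ℕ) (a : Fin n → EuclideanSpace ℝ (Fin 2)) (c : Fin n → ℝ)
    (ha : ∀ i, a i ≠ 0)
    (hcover : ∀ x : EuclideanSpace ℝ (Fin 2), ∃ i, ⟪a i, x⟫ < c i) :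
    ∃ i j k : Fin n, ∀ x : EuclideanSpace ℝ (Fin 2),
      ⟪a i, x⟫ < c i ∨ ⟪a j, x⟫ < c j ∨ ⟪a k, x⟫ < c k := by
  classical
  set F : Fin n → Set (EuclideanSpace ℝ (Fin 2)) := fun i => {x | c i ≤ ⟪a i, x⟫} with hF
  have hconv : ∀ i, Convex ℝ (F i) := by
    intro i
    exact convex_halfSpace_ge (LinearMap.isLinear (innerSL ℝ (a i)).toLinearMap) (c i)
  have hdim : Module.finrank ℝ (EuclideanSpace ℝ (Fin 2)) = 2 := by
    simp [finrank_euclideanSpace]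
  have hempty : ¬ (⋂ i ∈ (Finset.univ : Finset (Fin n)), F i).Nonempty := by
    rintro ⟨x, hx⟩
    obtain ⟨i, hi⟩ := hcover x
    have : x ∈ F i := by
      have := Set.mem_iInter₂.mp hx i (Finset.mem_univ i)
      exact this
    exact absurd hi (not_lt.mpr this)
  have key : ¬ ∀ I ⊆ (Finset.univ : Finset (Fin n)),
      I.card ≤ Module.finrank ℝ (EuclideanSpace ℝ (Fin 2)) + 1 → (⋂ i ∈ I, F i).Nonempty := by
    intro h
    exact hempty (Convex.helly_theorem' (fun i _ => hconv i) h)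
  push_neg at key
  obtain ⟨I, -, hIcard, hIempty⟩ := key
  rw [hdim] at hIcard
  -- I is nonempty since the empty intersection is the whole (nonempty) space
  have hIne : I.Nonempty := by
    rcases I.eq_empty_or_nonempty with h | h
    · exfalso
      rw [h] at hIempty
      simp at hIempty
    · exact h
  obtain ⟨i₀, hi₀⟩ := hIne
  -- pick three indices covering I
  have hsub : ∃ i j k : Fin n, ↑I ⊆ ({i, j, k} : Set (Fin n)) := by
    interval_cases h : I.card
    · exact absurd (Finset.card_eq_zero.mp h) (Finset.nonempty_iff_ne_empty.mp ⟨i₀, hi₀⟩)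
    · obtain ⟨x, hx⟩ := Finset.card_eq_one.mp h
      exact ⟨x, x, x, by simp [hx]⟩
    · obtain ⟨x, y, -, hx⟩ := Finset.card_eq_two.mp h
      exact ⟨x, y, y, by simp [hx, Set.insert_comm]⟩
    · obtain ⟨x, y, z, -, -, -, hx⟩ := Finset.card_eq_three.mp h
      exact ⟨x, y, z, by simp [hx]⟩
  obtain ⟨i, j, k, hijk⟩ := hsub
  refine ⟨i, j, k, fun x => ?_⟩
  by_contra hcon
  push_neg at hcon
  obtain ⟨h1, h2, h3⟩ := hcon
  have hxI : x ∈ ⋂ m ∈ I, F m := by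
    refine Set.mem_biInter fun m hm => ?_
    have := hijk hm
    simp only [Set.mem_insert_iff, Set.mem_singleton_iff] at this
    rcases this with rfl | rfl | rfl
    · exact h1
    · exact h2
    · exact h3
  rw [hIempty] at hxI
  exact hxI
end

section
/- Let h₁, …, hₙ be closed half-spaces in ℝ³ through the origin (i.e., of the form {x : ⟪νᵢ, x⟫ ≥ 0} for nonzero vectors νᵢ), and suppose the open complements {x : ⟪νᵢ, x⟫ < 0} together cover the unit sphere S². Then there exist at most six indices i₁, …, i₆ such that the corresponding open complements already cover S². -/
open scoped RealInnerProductSpace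

open Module Submodule

/-- If the open hemispheres `{x ∈ S² | ⟪ν i, x⟫ < 0}` cover the unit sphere,
then at most six of them already cover the sphere. -/
theorem six_hemispheres_cover (n : ℕ) (ν : Fin n → EuclideanSpace ℝ (Fin 3))
    (hν : ∀ i, ν i ≠ 0)
    (hcover : ∀ x : EuclideanSpace ℝ (Fin 3), ‖x‖ = 1 → ∃ i, ⟪ν i, x⟫ < 0) :
    ∃ S : Finset (Fin n), S.card ≤ 6 ∧
      ∀ x : EuclideanSpace ℝ (Fin 3), ‖x‖ = 1 → ∃ i ∈ S, ⟪ν i, x⟫ < 0 := by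
  classical
  by_contra hcon
  push_neg at hcon
  -- hcon : ∀ S, S.card ≤ 6 → ∃ x, ‖x‖ = 1 ∧ ∀ i ∈ S, 0 ≤ ⟪ν i, x⟫
  -- Step A : the ν's span the whole space
  have hspan : span ℝ (Set.range ν) = ⊤ := by
    by_contra hne
    have hob : (span ℝ (Set.range ν))ᗮ ≠ ⊥ :=
      fun h => hne (Submodule.orthogonal_eq_bot_iff.mp h)
    obtain ⟨z, hz, hz0⟩ := (Submodule.ne_bot_iff _).mp hob
    obtain ⟨i, hi⟩ := hcover (‖z‖⁻¹ • z) (norm_smul_inv_norm hz0)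
    have h0 : ⟪ν i, z⟫ = 0 :=
      (Submodule.mem_orthogonal _ _).mp hz _ (subset_span (Set.mem_range_self i))
    rw [real_inner_smul_right, h0, mul_zero] at hi
    exact lt_irrefl 0 hi
  have hnne : Nonempty (Fin n) := by
    rcases isEmpty_or_nonempty (Fin n) with h | h
    · exfalso
      rw [Set.range_eq_empty ν, Submodule.span_empty] at hspan
      exact bot_ne_top hspan
    · exact h
  -- Step B : extract at most three indices whose ν's span
  obtain ⟨t, hts, htspan, htli⟩ := exists_linearIndependent ℝ (Set.range ν)
  have htspan' : span ℝ t = ⊤ := htspan.trans hspan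
  have htfin : t.Finite := htli.setFinite
  have : Fintype t := htfin.fintype
  have htcard : t.toFinset.card = 3 := by
    have h1 := finrank_span_set_eq_card htli
    rw [htspan'] at h1
    simpa using h1.symm
  have hch : ∀ v ∈ t, ∃ i, ν i = v := fun v hv => hts hv
  choose! f hf using hch
  set B : Finset (Fin n) := t.toFinset.image f with hB
  have hBcard : B.card ≤ 3 := le_trans (Finset.card_image_le) (le_of_eq htcard)
  have hsub : t ⊆ ν '' ↑B := by
    intro v hv
    refine ⟨f v, ?_, hf v hv⟩
    simp only [hB, Finset.coe_image, Set.mem_image, Finset.mem_coe, Set.mem_toFinset]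
    exact ⟨v, hv, rfl⟩
  have hBspan : span ℝ (ν '' ↑B) = ⊤ :=
    eq_top_iff.mpr (htspan' ▸ span_mono hsub)
  -- Step C : the slicing functional m
  set m : EuclideanSpace ℝ (Fin 3) := ∑ i ∈ B, ν i with hm
  have key : ∀ x : EuclideanSpace ℝ (Fin 3),
      (∀ i ∈ B, 0 ≤ ⟪ν i, x⟫) → ⟪m, x⟫ ≤ 0 → x = 0 := by
    intro x hx hmx
    have hsum : ⟪m, x⟫ = ∑ i ∈ B, ⟪ν i, x⟫ := by rw [hm]; exact sum_inner _ _ _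
    have h0 : ∑ i ∈ B, ⟪ν i, x⟫ = 0 :=
      le_antisymm (hsum ▸ hmx) (Finset.sum_nonneg hx)
    have hzero : ∀ i ∈ B, ⟪ν i, x⟫ = 0 :=
      (Finset.sum_eq_zero_iff_of_nonneg hx).mp h0
    have hxo : x ∈ (span ℝ (ν '' ↑B))ᗮ := by
      rw [Submodule.mem_orthogonal]
      intro u hu
      induction hu using Submodule.span_induction with
      | mem u hu =>
          obtain ⟨i, hi, rfl⟩ := hu
          exact hzero i (by exact_mod_cast hi)
      | zero => exact inner_zero_left x
      | add u v _ _ hu hv => rw [inner_add_left, hu, hv, add_zero]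
      | smul c u _ hu => rw [real_inner_smul_left, hu, mul_zero]
    rw [hBspan, Submodule.top_orthogonal_eq_bot] at hxo
    exact (Submodule.mem_bot ℝ).mp hxo
  have hm0 : m ≠ 0 := by
    intro h0
    obtain ⟨x, hx1, hx2⟩ := hcon B (le_trans hBcard (by norm_num))
    have hx0 : x = 0 := key x hx2 (by rw [h0, inner_zero_left])
    rw [hx0, norm_zero] at hx1
    norm_num at hx1
  set t₀ : EuclideanSpace ℝ (Fin 3) := (⟪m, m⟫)⁻¹ • m with ht₀
  have hmt₀ : ⟪m, t₀⟫ = 1 := by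
    rw [ht₀, real_inner_smul_right]
    exact inv_mul_cancel₀ (inner_self_ne_zero.mpr hm0)
  -- the convex sets on the slice
  set K : Fin n → Set (EuclideanSpace ℝ (Fin 3)) := fun i =>
    {x | 0 ≤ ⟪ν i, x⟫ ∧ ⟪m, x⟫ = 1 ∧ ∀ j ∈ B, 0 ≤ ⟪ν j, x⟫} with hK
  have hKconv : ∀ i, Convex ℝ (K i) := by
    intro i x hx y hy a b ha hb hab
    obtain ⟨hx1, hx2, hx3⟩ := hx
    obtain ⟨hy1, hy2, hy3⟩ := hy
    refine ⟨?_, ?_, ?_⟩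
    · rw [inner_add_right, real_inner_smul_right, real_inner_smul_right]
      exact add_nonneg (mul_nonneg ha hx1) (mul_nonneg hb hy1)
    · rw [inner_add_right, real_inner_smul_right, real_inner_smul_right, hx2, hy2]
      linarith
    · intro j hj
      rw [inner_add_right, real_inner_smul_right, real_inner_smul_right]
      exact add_nonneg (mul_nonneg ha (hx3 j hj)) (mul_nonneg hb (hy3 j hj))
  -- transport to the 2-dimensional orthogonal complement of m
  set V : Submodule ℝ (EuclideanSpace ℝ (Fin 3)) := (ℝ ∙ m)ᗮ with hV
  have hVrank : finrank ℝ V = 2 := by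
    have h1 : finrank ℝ (ℝ ∙ m) = 1 := finrank_span_singleton hm0
    have h2 := Submodule.finrank_add_finrank_orthogonal (𝕜 := ℝ) (K := ℝ ∙ m)
    have h3 : finrank ℝ (EuclideanSpace ℝ (Fin 3)) = 3 := by simp
    rw [h1, h3] at h2
    rw [hV]
    omega
  set K' : Fin n → Set V := fun i => {v : V | t₀ + (v : EuclideanSpace ℝ (Fin 3)) ∈ K i}
    with hK'
  have hK'conv : ∀ i, Convex ℝ (K' i) := by
    intro i v hv w hw a b ha hb hab
    show t₀ + ((a • v + b • w : V) : EuclideanSpace ℝ (Fin 3)) ∈ K i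
    have hco : (t₀ + ((a • v + b • w : V) : EuclideanSpace ℝ (Fin 3)))
        = a • (t₀ + (v : EuclideanSpace ℝ (Fin 3)))
          + b • (t₀ + (w : EuclideanSpace ℝ (Fin 3))) := by
      push_cast
      rw [smul_add, smul_add]
      rw [show a • t₀ + a • (v : EuclideanSpace ℝ (Fin 3))
            + (b • t₀ + b • (w : EuclideanSpace ℝ (Fin 3)))
          = (a + b) • t₀ + (a • (v : EuclideanSpace ℝ (Fin 3))
            + b • (w : EuclideanSpace ℝ (Fin 3))) by
        rw [add_smul]; abel]
      rw [hab, one_smul]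
    rw [hco]
    exact hKconv i hv hw ha hb hab
  have h_inter : ∀ I : Finset (Fin n), I ⊆ Finset.univ →
      I.card ≤ finrank ℝ V + 1 → (⋂ i ∈ I, K' i).Nonempty := by
    intro I _ hIcard
    rw [hVrank] at hIcard
    obtain ⟨x, hx1, hx2⟩ := hcon (B ∪ I)
      (le_trans (Finset.card_union_le _ _) (by omega))
    have hc0 : 0 < ⟪m, x⟫ := by
      rcases lt_or_ge 0 ⟪m, x⟫ with h | h
      · exact h
      · exfalso
        have hx0 := key x (fun j hj => hx2 j (Finset.mem_union_left _ hj)) h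
        rw [hx0, norm_zero] at hx1
        norm_num at hx1
    set y : EuclideanSpace ℝ (Fin 3) := (⟪m, x⟫)⁻¹ • x with hy
    have hmy : ⟪m, y⟫ = 1 := by
      rw [hy, real_inner_smul_right]
      exact inv_mul_cancel₀ (ne_of_gt hc0)
    have hyK : ∀ i ∈ B ∪ I, 0 ≤ ⟪ν i, y⟫ := by
      intro i hi
      rw [hy, real_inner_smul_right]
      exact mul_nonneg (inv_nonneg.mpr hc0.le) (hx2 i hi)
    have hyV : y - t₀ ∈ V := by
      rw [hV, Submodule.mem_orthogonal]
      intro u hu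
      obtain ⟨r, rfl⟩ := Submodule.mem_span_singleton.mp hu
      rw [real_inner_smul_left, inner_sub_right, hmy, hmt₀, sub_self, mul_zero]
    refine ⟨⟨y - t₀, hyV⟩, ?_⟩
    rw [Set.mem_iInter₂]
    intro i hi
    show t₀ + (y - t₀) ∈ K i
    rw [add_sub_cancel]
    exact ⟨hyK i (Finset.mem_union_right _ hi), hmy,
      fun j hj => hyK j (Finset.mem_union_left _ hj)⟩
  have hHelly := Convex.helly_theorem' (𝕜 := ℝ) (F := K') (s := Finset.univ)
    (fun i _ => hK'conv i) h_inter
  obtain ⟨v, hv⟩ := hHelly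
  rw [Set.mem_iInter₂] at hv
  set x : EuclideanSpace ℝ (Fin 3) := t₀ + (v : EuclideanSpace ℝ (Fin 3)) with hx
  have hxK : ∀ i, x ∈ K i := fun i => hv i (Finset.mem_univ i)
  have hx0 : x ≠ 0 := by
    intro h0
    have h1 := (hxK hnne.some).2.1
    rw [h0, inner_zero_right] at h1
    norm_num at h1
  obtain ⟨i, hi⟩ := hcover (‖x‖⁻¹ • x) (norm_smul_inv_norm hx0)
  rw [real_inner_smul_right] at hi
  have : 0 ≤ ‖x‖⁻¹ * ⟪ν i, x⟫ :=
    mul_nonneg (inv_nonneg.mpr (norm_nonneg x)) (hxK i).1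
  linarith
end

section
/- Let P = ∩_{i=1}^{n} {x ∈ ℝ³ : ⟪νᵢ, x⟫ ≥ cᵢ} be a bounded convex polytope with nonempty interior, where each νᵢ is a unit vector. Then the number of indices i for which there exists d ∈ S² with ⟪νᵢ, d⟫ < 0 and ⟪ν_j, d⟫ ≥ 0 for all j ≠ i is at most six. -/
open scoped RealInnerProductSpace Classical
open Finset Module

-- grouping helper
lemma sum_div_card_smul {ι E : Type*} [AddCommGroup E] [Module ℝ E] [DecidableEq E]
    (s : Finset ι) (v : ι → E) (w : E → ℝ) :
    ∑ i ∈ s, (w (v i) / (((s.filter (fun j => v j = v i)).card : ℝ))) • v i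
      = ∑ y ∈ s.image v, w y • y := by
  refine (Finset.sum_image' _ (fun c hc => ?_)).symm
  have hc' : c ∈ s.filter (fun j => v j = v c) := by simp [hc]
  have hN : (0:ℝ) < ((s.filter (fun j => v j = v c)).card : ℝ) := by
    exact_mod_cast Finset.card_pos.2 ⟨c, hc'⟩
  have heq : ∀ j ∈ s.filter (fun j => v j = v c),
      (w (v j) / (((s.filter (fun k => v k = v j)).card : ℝ))) • v j
        = (w (v c) / (((s.filter (fun j => v j = v c)).card : ℝ))) • v c := by
    intro j hj
    have hvj : v j = v c := (Finset.mem_filter.1 hj).2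
    rw [hvj]
  rw [Finset.sum_congr rfl heq, Finset.sum_const, ← Nat.cast_smul_eq_nsmul ℝ, smul_smul]
  congr 1
  field_simp

lemma exists_pos_dependency {ι : Type*} {E : Type*} [NormedAddCommGroup E] [InnerProductSpace ℝ E]
    [FiniteDimensional ℝ E] (hE : 0 < finrank ℝ E)
    (s : Finset ι) (v : ι → E)
    (H : ∀ u : E, u ≠ 0 → ∃ i ∈ s, ⟪v i, u⟫ < 0) :
    ∃ μ : ι → ℝ, (∀ i, 0 ≤ μ i) ∧ ∑ i ∈ s, μ i • v i = 0 ∧ ∃ i ∈ s, 0 < μ i := by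
  classical
  have hnt : Nontrivial E := Module.nontrivial_of_finrank_pos hE
  obtain ⟨u₀, hu₀⟩ := exists_ne (0 : E)
  obtain ⟨iw, hiw, _⟩ := H u₀ hu₀
  -- 0 is in the convex hull of the v i
  have h0 : (0:E) ∈ convexHull ℝ (↑(s.image v) : Set E) := by
    by_contra h0
    have hcl : IsClosed (convexHull ℝ (↑(s.image v) : Set E)) :=
      ((s.image v).finite_toSet.isCompact_convexHull ℝ).isClosed
    obtain ⟨f, u, hfu, hb⟩ :=
      geometric_hahn_banach_point_closed (convex_convexHull ℝ _) hcl h0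
    have hf0 : (0:ℝ) < u := by simpa using hfu
    set w := (InnerProductSpace.toDual ℝ E).symm f with hw
    have hwf : ∀ y, ⟪w, y⟫ = f y := fun y => InnerProductSpace.toDual_symm_apply
    have hmem : ∀ i ∈ s, v i ∈ convexHull ℝ (↑(s.image v) : Set E) := by
      intro i hi
      exact subset_convexHull ℝ _ (by simp; exact ⟨i, hi, rfl⟩)
    have hwn : w ≠ 0 := by
      intro hw0
      have := hb (v iw) (hmem iw hiw)
      rw [← hwf (v iw), hw0, inner_zero_left] at this
      linarith
    obtain ⟨i, his, hineg⟩ := H w hwn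
    have := hb (v i) (hmem i his)
    rw [← hwf (v i)] at this
    rw [real_inner_comm] at hineg
    linarith
  rw [Finset.convexHull_eq] at h0
  obtain ⟨w, hw0, hw1, hcm⟩ := h0
  have hcm' : ∑ y ∈ s.image v, w y • y = 0 := by
    rw [Finset.centerMass_eq_of_sum_1 _ id hw1] at hcm
    simpa using hcm
  refine ⟨fun i => if i ∈ s then w (v i) / (((s.filter (fun j => v j = v i)).card : ℝ)) else 0,
    ?_, ?_, ?_⟩
  · intro i
    by_cases hi : i ∈ s
    · simp only [hi, if_true]
      exact div_nonneg (hw0 _ (Finset.mem_image.2 ⟨i, hi, rfl⟩)) (by positivity)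
    · simp [hi]
  · have hcg : ∑ i ∈ s, (if i ∈ s then w (v i) / (((s.filter (fun j => v j = v i)).card : ℝ)) else 0) • v i
        = ∑ i ∈ s, (w (v i) / (((s.filter (fun j => v j = v i)).card : ℝ))) • v i :=
      Finset.sum_congr rfl (fun i hi => by simp only [if_pos hi])
    exact hcg.trans ((sum_div_card_smul s v w).trans hcm')
  · by_contra hno
    push_neg at hno
    have hle : ∀ y ∈ s.image v, w y ≤ 0 := by
      intro y hy
      obtain ⟨i, hi, rfl⟩ := Finset.mem_image.1 hy
      have h1 := hno i hi
      rw [if_pos hi] at h1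
      have hN : (0:ℝ) < ((s.filter (fun j => v j = v i)).card : ℝ) := by
        exact_mod_cast Finset.card_pos.2 ⟨i, by simp [hi]⟩
      by_contra hgt
      push_neg at hgt
      exact absurd (div_pos hgt hN) (not_lt.2 h1)
    have : (1:ℝ) ≤ 0 := hw1 ▸ Finset.sum_nonpos hle
    linarith

lemma rank_zero_case {ι : Type} {E : Type} [NormedAddCommGroup E] [InnerProductSpace ℝ E]
    [FiniteDimensional ℝ E] (h0 : finrank ℝ E = 0) (s : Finset ι) (v : ι → E) :
    ∃ t ⊆ s, t.card ≤ 2 * finrank ℝ E ∧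
      ∀ x : E, ∃ μ : ι → ℝ, (∀ i, 0 ≤ μ i) ∧ x = ∑ i ∈ t, μ i • v i := by
  have : Subsingleton E := finrank_zero_iff.1 h0
  exact ⟨∅, Finset.empty_subset s, by simp, fun x => ⟨0, fun i => le_rfl,
    Subsingleton.elim _ _⟩⟩

lemma exists_small_spanning :
    ∀ (d : ℕ) (E : Type) [NormedAddCommGroup E] [InnerProductSpace ℝ E]
      [FiniteDimensional ℝ E], finrank ℝ E ≤ d →
      ∀ (ι : Type) (s : Finset ι) (v : ι → E),
      (∀ u : E, u ≠ 0 → ∃ i ∈ s, ⟪v i, u⟫ < 0) →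
      ∃ t ⊆ s, t.card ≤ 2 * finrank ℝ E ∧
        ∀ x : E, ∃ μ : ι → ℝ, (∀ i, 0 ≤ μ i) ∧ x = ∑ i ∈ t, μ i • v i := by
  intro d
  induction d with
  | zero =>
    intro E _ _ _ hrank ι s v _
    exact rank_zero_case (Nat.le_zero.1 hrank) s v
  | succ d IH =>
    intro E _ _ _ hrank ι s v H
    by_cases h0 : finrank ℝ E = 0
    · exact rank_zero_case h0 s v
    have hE : 0 < finrank ℝ E := Nat.pos_of_ne_zero h0
    classical
    set sf := s.filter (fun i => v i ≠ 0) with hsf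
    have Hf : ∀ u : E, u ≠ 0 → ∃ i ∈ sf, ⟪v i, u⟫ < 0 := by
      intro u hu
      obtain ⟨i, his, hi⟩ := H u hu
      refine ⟨i, Finset.mem_filter.2 ⟨his, fun h => ?_⟩, hi⟩
      rw [h, inner_zero_left] at hi; linarith
    obtain ⟨μ0, hμ00, hμ0sum, i0, hi0sf, hi0pos⟩ := exists_pos_dependency hE sf v Hf
    -- minimal positive circuit
    set C : Set (Finset ι) :=
      {A | A ⊆ sf ∧ A.Nonempty ∧ ∃ μ : ι → ℝ, (∀ i ∈ A, 0 < μ i) ∧ ∑ i ∈ A, μ i • v i = 0}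
      with hC
    have hCne : C.Nonempty := by
      refine ⟨sf.filter (fun i => 0 < μ0 i), Finset.filter_subset _ _,
        ⟨i0, Finset.mem_filter.2 ⟨hi0sf, hi0pos⟩⟩, μ0,
        fun i hi => (Finset.mem_filter.1 hi).2, ?_⟩
      rw [Finset.sum_filter_of_ne]
      · exact hμ0sum
      · intro i hi hne
        rcases lt_or_eq_of_le (hμ00 i) with h | h
        · exact h
        · exact absurd (by rw [← h, zero_smul]) hne
    have hCfin : C.Finite := by
      refine Set.Finite.subset sf.powerset.finite_toSet (fun A hA => ?_)
      simpa [Finset.mem_powerset] using hA.1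
    obtain ⟨A, hAC, hAmin⟩ := Set.exists_min_image C Finset.card hCfin hCne
    obtain ⟨hAsf, hAne, μ, hμpos, hμsum⟩ := hAC
    have hAv : ∀ i ∈ A, v i ≠ 0 := fun i hi => (Finset.mem_filter.1 (hAsf hi)).2
    obtain ⟨i₀, hi₀⟩ := hAne
    set L := Submodule.span ℝ (v '' (A : Set ι)) with hL
    -- cone of A covers L
    have hcone : ∀ y ∈ L, ∃ η : ι → ℝ, (∀ i, 0 ≤ η i) ∧ y = ∑ i ∈ A, η i • v i := by
      intro y hy
      rw [hL, show v '' (A : Set ι) = ((A.image v : Finset E) : Set E) by simp,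
        Submodule.mem_span_finset] at hy
      obtain ⟨f, -, hf⟩ := hy
      set c : ι → ℝ := fun i => f (v i) / ((A.filter (fun j => v j = v i)).card : ℝ) with hc
      have hcy : ∑ i ∈ A, c i • v i = y := (sum_div_card_smul A v f).trans hf
      obtain ⟨m, hm, hmax⟩ := A.exists_max_image (fun i => -c i / μ i) ⟨i₀, hi₀⟩
      set M := max (-c m / μ m) 0 with hM
      refine ⟨fun i => if i ∈ A then c i + M * μ i else 0, ?_, ?_⟩
      · intro i
        by_cases hi : i ∈ A
        · simp only [hi, if_true]
          have h1 : -c i / μ i ≤ M := le_trans (hmax i hi) (le_max_left _ _)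
          have h2 : 0 < μ i := hμpos i hi
          rw [div_le_iff₀ h2] at h1
          linarith
        · simp [hi]
      · have hcg : ∑ i ∈ A, (if i ∈ A then c i + M * μ i else 0) • v i
            = ∑ i ∈ A, (c i + M * μ i) • v i :=
          Finset.sum_congr rfl (fun i hi => by simp only [if_pos hi])
        rw [hcg]
        have : ∑ i ∈ A, (c i + M * μ i) • v i
            = ∑ i ∈ A, c i • v i + M • ∑ i ∈ A, μ i • v i := by
          rw [Finset.smul_sum, ← Finset.sum_add_distrib]
          exact Finset.sum_congr rfl (fun i hi => by rw [add_smul, smul_smul])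
        rw [this, hcy, hμsum, smul_zero, add_zero]
    -- the erased family is linearly independent
    -- key step: any signed dependency on A.erase i₀ leads to a smaller circuit
    have key : ∀ c : ι → ℝ, (∀ i, i ∉ A.erase i₀ → c i = 0) →
        ∑ i ∈ A.erase i₀, c i • v i = 0 → (∃ i ∈ A.erase i₀, c i < 0) → False := by
      intro c hc0 hcsum ⟨iNeg, hiNegmem, hiNeglt⟩
      set Neg := (A.erase i₀).filter (fun i => c i < 0) with hNeg
      have hNegne : Neg.Nonempty := ⟨iNeg, Finset.mem_filter.2 ⟨hiNegmem, hiNeglt⟩⟩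
      obtain ⟨i₁, hi₁, hmin⟩ := Neg.exists_min_image (fun i => μ i / (-c i)) hNegne
      have hi₁A : i₁ ∈ A := Finset.erase_subset i₀ A (Finset.mem_filter.1 hi₁).1
      have hci₁ : c i₁ < 0 := (Finset.mem_filter.1 hi₁).2
      set ε := μ i₁ / (-c i₁) with hε
      have hεpos : 0 < ε := div_pos (hμpos i₁ hi₁A) (by linarith)
      set μ' : ι → ℝ := fun i => μ i + ε * c i with hμ'
      have hμ'0 : ∀ i ∈ A, 0 ≤ μ' i := by
        intro i hi
        by_cases hci : c i < 0
        · have hiNg : i ∈ Neg := by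
            refine Finset.mem_filter.2 ⟨Finset.mem_erase.2 ⟨fun h => ?_, hi⟩, hci⟩
            rw [h] at hci
            rw [hc0 i₀ (Finset.notMem_erase i₀ A)] at hci
            linarith
          have h2 : ε * -c i ≤ μ i :=
            (le_div_iff₀ (show (0:ℝ) < -c i by linarith)).1 (hmin i hiNg)
          show 0 ≤ μ i + ε * c i
          linarith
        · show 0 ≤ μ i + ε * c i
          exact add_nonneg (hμpos i hi).le (mul_nonneg hεpos.le (not_lt.1 hci))
      have hμ'i₀ : 0 < μ' i₀ := by
        have hc : c i₀ = 0 := hc0 i₀ (Finset.notMem_erase i₀ A)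
        simp only [hμ', hc, mul_zero, add_zero]
        exact hμpos i₀ hi₀
      have hμ'i₁ : μ' i₁ = 0 := by
        have hci₁' : c i₁ ≠ 0 := ne_of_lt hci₁
        show μ i₁ + ε * c i₁ = 0
        rw [hε, div_mul_eq_mul_div, div_neg, mul_comm, mul_div_assoc]
        field_simp
        ring
      have hcsumA : ∑ i ∈ A, c i • v i = 0 := by
        rw [← Finset.sum_erase_add A _ hi₀, hc0 i₀ (Finset.notMem_erase i₀ A), zero_smul,
          add_zero]
        exact hcsum
      have hμ'sum : ∑ i ∈ A, μ' i • v i = 0 := by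
        have : ∑ i ∈ A, μ' i • v i
            = ∑ i ∈ A, μ i • v i + ε • ∑ i ∈ A, c i • v i := by
          rw [Finset.smul_sum, ← Finset.sum_add_distrib]
          exact Finset.sum_congr rfl (fun i hi => by rw [hμ', add_smul, smul_smul])
        rw [this, hμsum, hcsumA, smul_zero, add_zero]
      set A' := A.filter (fun i => 0 < μ' i) with hA'
      have hA'C : A' ∈ C := by
        refine ⟨(Finset.filter_subset _ _).trans hAsf,
          ⟨i₀, Finset.mem_filter.2 ⟨hi₀, hμ'i₀⟩⟩, μ',
          fun i hi => (Finset.mem_filter.1 hi).2, ?_⟩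
        rw [Finset.sum_filter_of_ne]
        · exact hμ'sum
        · intro i hi hne
          rcases lt_or_eq_of_le (hμ'0 i hi) with h | h
          · exact h
          · exact absurd (by rw [← h, zero_smul]) hne
      have hlt : A'.card < A.card := by
        refine Finset.card_lt_card (Finset.ssubset_iff_of_subset (Finset.filter_subset _ _)
          |>.2 ⟨i₁, hi₁A, ?_⟩)
        simp only [hA', Finset.mem_filter, hμ'i₁]
        exact fun h => lt_irrefl 0 h.2
      exact absurd (hAmin A' hA'C) (by omega)
    have hli : LinearIndependent ℝ (fun i : (A.erase i₀ : Finset ι) => v i) := by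
      by_contra hdep
      obtain ⟨g, hgsum, j, hgj⟩ := Fintype.not_linearIndependent_iff.1 hdep
      set c : ι → ℝ := fun i => if h : i ∈ A.erase i₀ then g ⟨i, h⟩ else 0 with hcdef
      have hc0 : ∀ i, i ∉ A.erase i₀ → c i = 0 := fun i hi => dif_neg hi
      have hcsum : ∑ i ∈ A.erase i₀, c i • v i = 0 := by
        rw [← Finset.sum_attach (A.erase i₀) (fun i => c i • v i)]
        rw [Finset.sum_congr rfl (fun i _ => by rw [show c i.1 = g i by rw [hcdef]; exact dif_pos i.2])]
        exact hgsum
      have hcj : c j ≠ 0 := by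
        rw [show c j.1 = g j by rw [hcdef]; exact dif_pos j.2]
        exact hgj
      by_cases hneg : ∃ i ∈ A.erase i₀, c i < 0
      · exact key c hc0 hcsum hneg
      · push_neg at hneg
        refine key (fun i => -c i) (fun i hi => by simp [hc0 i hi]) ?_ ⟨j, j.2, ?_⟩
        · have hcg : ∑ i ∈ A.erase i₀, (fun i => -c i) i • v i
              = -∑ i ∈ A.erase i₀, c i • v i := by
            rw [← Finset.sum_neg_distrib]
            exact Finset.sum_congr rfl (fun i _ => by rw [neg_smul])
          rw [hcg, hcsum, neg_zero]
        · have h1 : 0 < c j := lt_of_le_of_ne (hneg j j.2) (Ne.symm hcj)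
          show -c j.1 < 0
          linarith
    -- card bound
    have hcard_le : A.card ≤ finrank ℝ L + 1 := by
      have hmem : ∀ i : (A.erase i₀ : Finset ι), v i ∈ L := fun i =>
        Submodule.subset_span (Set.mem_image_of_mem v (Finset.erase_subset i₀ A i.2))
      have hliL : LinearIndependent ℝ (fun i : (A.erase i₀ : Finset ι) => (⟨v i, hmem i⟩ : L)) := by
        apply LinearIndependent.of_comp L.subtype
        exact hli
      have hcard := hliL.fintype_card_le_finrank
      rw [Fintype.card_coe, Finset.card_erase_of_mem hi₀] at hcard
      omega
    have hL1 : 1 ≤ finrank ℝ L := by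
      by_contra hcon
      have hzero : finrank ℝ L = 0 := by omega
      have : L = ⊥ := Submodule.finrank_eq_zero.1 hzero
      have hv0 : v i₀ ∈ L := Submodule.subset_span (Set.mem_image_of_mem v hi₀)
      rw [this, Submodule.mem_bot] at hv0
      exact hAv i₀ hi₀ hv0
    -- project to the orthogonal complement
    set K := Lᗮ with hK
    have hrK : finrank ℝ K + finrank ℝ L = finrank ℝ E := by
      rw [hK]
      have := Submodule.finrank_add_finrank_orthogonal (K := L)
      omega
    have hproj : ∀ (x : E) (u : K), ⟪(Submodule.orthogonalProjectionOnto K x : K), u⟫ = ⟪x, (u : E)⟫ := by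
      intro x u
      have h1 : x - Submodule.orthogonalProjectionOnto K x ∈ Kᗮ := Submodule.sub_starProjection_mem_orthogonal x
      have h2 : ⟪x - (Submodule.orthogonalProjectionOnto K x : E), (u : E)⟫ = 0 :=
        Submodule.inner_left_of_mem_orthogonal u.2 h1
      rw [inner_sub_left, sub_eq_zero] at h2
      rw [Submodule.coe_inner]
      exact h2.symm
    have HK : ∀ u : K, u ≠ 0 → ∃ i ∈ s, ⟪Submodule.orthogonalProjectionOnto K (v i), u⟫ < 0 := by
      intro u hu
      have hu' : (u : E) ≠ 0 := fun h => hu (Subtype.coe_injective (by simpa using h))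
      obtain ⟨i, his, hi⟩ := H (u : E) hu'
      exact ⟨i, his, by rw [hproj]; exact hi⟩
    have hrK_le : finrank ℝ K ≤ d := by omega
    obtain ⟨t', ht's, ht'card, ht'cone⟩ :=
      IH K hrK_le ι s (fun i => Submodule.orthogonalProjectionOnto K (v i)) HK
    refine ⟨A ∪ t', Finset.union_subset (hAsf.trans (Finset.filter_subset _ s)) ht's, ?_, ?_⟩
    · have h1 : (A ∪ t').card ≤ A.card + t'.card := Finset.card_union_le _ _
      omega
    · intro x
      obtain ⟨η, hη0, hηx⟩ := ht'cone (Submodule.orthogonalProjectionOnto K x)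
      set y := x - ∑ i ∈ t', η i • v i with hy
      have hyL : y ∈ L := by
        have hy0 : Submodule.orthogonalProjectionOnto K y = 0 := by
          rw [hy, map_sub, map_sum]
          rw [Finset.sum_congr rfl (fun i _ => (Submodule.orthogonalProjectionOnto K).map_smul (η i) (v i))]
          rw [← hηx, sub_self]
        rw [Submodule.orthogonalProjectionOnto_eq_zero_iff] at hy0
        rw [hK, Submodule.orthogonal_orthogonal] at hy0
        exact hy0
      obtain ⟨η', hη'0, hη'y⟩ := hcone y hyL
      refine ⟨fun i => (if i ∈ A then η' i else 0) + (if i ∈ t' then η i else 0),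
        fun i => add_nonneg (by split <;> simp [hη'0]) (by split <;> simp [hη0]), ?_⟩
      have hsplit : ∑ i ∈ A ∪ t', ((if i ∈ A then η' i else 0) + (if i ∈ t' then η i else 0)) • v i
          = ∑ i ∈ A ∪ t', (if i ∈ A then η' i • v i else 0)
            + ∑ i ∈ A ∪ t', (if i ∈ t' then η i • v i else 0) := by
        rw [← Finset.sum_add_distrib]
        refine Finset.sum_congr rfl (fun i _ => ?_)
        rw [add_smul]
        congr 1 <;> split <;> simp
      rw [hsplit, Finset.sum_ite_mem, Finset.sum_ite_mem, Finset.union_inter_cancel_left,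
        Finset.union_inter_cancel_right, ← hη'y]
      rw [hy]
      abel

/-- A bounded convex polytope has at most six valid top facets. -/
theorem at_most_six_valid_top_facets (n : ℕ)
    (ν : Fin n → EuclideanSpace ℝ (Fin 3)) (c : Fin n → ℝ) (hν : ∀ i, ‖ν i‖ = 1)
    (P : Set (EuclideanSpace ℝ (Fin 3)))
    (hP : P = ⋂ i, {x | c i ≤ ⟪ν i, x⟫})
    (hbd : Bornology.IsBounded P) (hint : (interior P).Nonempty) :
    Set.ncard {i : Fin n | ∃ d : EuclideanSpace ℝ (Fin 3), ‖d‖ = 1 ∧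
      ⟪ν i, d⟫ < 0 ∧ ∀ j, j ≠ i → 0 ≤ ⟪ν j, d⟫} ≤ 6 := by
  classical
  obtain ⟨x₀, hx₀⟩ := hint
  have hx₀P : x₀ ∈ P := interior_subset hx₀
  have hx₀' : ∀ i, c i ≤ ⟪ν i, x₀⟫ := by
    rw [hP] at hx₀P
    simpa using fun i => Set.mem_iInter.1 hx₀P i
  obtain ⟨R, hR⟩ := isBounded_iff_forall_norm_le.1 hbd
  have H : ∀ u : EuclideanSpace ℝ (Fin 3), u ≠ 0 →
      ∃ i ∈ (Finset.univ : Finset (Fin n)), ⟪ν i, u⟫ < 0 := by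
    intro u hu
    by_contra hno
    push_neg at hno
    have hpos : ∀ i, 0 ≤ ⟪ν i, u⟫ := fun i => hno i (Finset.mem_univ i)
    have hun : 0 < ‖u‖ := norm_pos_iff.2 hu
    have hR0 : ‖x₀‖ ≤ R := hR x₀ hx₀P
    set t : ℝ := (R + ‖x₀‖ + 1) / ‖u‖ with ht
    have htpos : 0 < t := div_pos (by have := norm_nonneg x₀; linarith) hun
    have hmem : x₀ + t • u ∈ P := by
      rw [hP]
      refine Set.mem_iInter.2 (fun i => ?_)
      show c i ≤ ⟪ν i, x₀ + t • u⟫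
      rw [inner_add_right, real_inner_smul_right]
      have h1 := mul_nonneg htpos.le (hpos i)
      linarith [hx₀' i]
    have h2 := hR _ hmem
    have h3 : ‖t • u‖ ≤ ‖x₀ + t • u‖ + ‖x₀‖ := by
      have := norm_sub_le (x₀ + t • u) x₀
      simpa using this
    rw [norm_smul, Real.norm_eq_abs, abs_of_pos htpos, ht, div_mul_cancel₀ _ (ne_of_gt hun)]
      at h3
    linarith
  have hrank : finrank ℝ (EuclideanSpace ℝ (Fin 3)) ≤ 3 := le_of_eq finrank_euclideanSpace_fin
  obtain ⟨t, hts, htcard, htcone⟩ :=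
    exists_small_spanning 3 (EuclideanSpace ℝ (Fin 3)) hrank (Fin n) Finset.univ ν H
  have htcard6 : t.card ≤ 6 := by
    rw [show finrank ℝ (EuclideanSpace ℝ (Fin 3)) = 3 from finrank_euclideanSpace_fin] at htcard
    omega
  have hsub : {i : Fin n | ∃ d : EuclideanSpace ℝ (Fin 3), ‖d‖ = 1 ∧
      ⟪ν i, d⟫ < 0 ∧ ∀ j, j ≠ i → 0 ≤ ⟪ν j, d⟫} ⊆ (t : Set (Fin n)) := by
    rintro i ⟨d, hd1, hdneg, hdpos⟩
    obtain ⟨μ, hμ0, hμd⟩ := htcone (-d)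
    have hsum : ∑ j ∈ t, μ j * ⟪ν j, d⟫ = -1 := by
      have h4 : ⟪-d, d⟫ = ∑ j ∈ t, ⟪μ j • ν j, d⟫ := by
        rw [← sum_inner, ← hμd]
      rw [inner_neg_left, real_inner_self_eq_norm_sq, hd1] at h4
      rw [Finset.sum_congr rfl (fun j _ => real_inner_smul_left (ν j) d (μ j))] at h4
      rw [← h4]
      norm_num
    have hex : ∃ j ∈ t, μ j * ⟪ν j, d⟫ < 0 := by
      by_contra hno
      push_neg at hno
      have := Finset.sum_nonneg hno
      rw [hsum] at this
      linarith
    obtain ⟨j, hjt, hj⟩ := hex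
    have hνj : ⟪ν j, d⟫ < 0 := by
      by_contra hge
      push_neg at hge
      exact absurd (mul_nonneg (hμ0 j) hge) (not_le.2 hj)
    have hji : j = i := by
      by_contra hne
      exact absurd (hdpos j hne) (not_le.2 hνj)
    rw [← hji]
    exact hjt
  have hfin := Set.ncard_le_ncard hsub t.finite_toSet
  rw [Set.ncard_coe_finset] at hfin
  omega
end

section
/- Let P be a bounded convex polytope in ℝ³ with facets F₁, …, Fₙ and inner normals ν₁, …, νₙ, and fix an index i. A direction d ∈ S² satisfies ⟪νᵢ, d⟫ < 0 and ⟪ν_j, d⟫ ≥ 0 for all j ≠ i if and only if it satisfies ⟪νᵢ, d⟫ < 0 and ⟪ν_j, d⟫ ≥ 0 for all facets F_j that share an edge with Fᵢ. -/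
open scoped RealInnerProductSpace

local notation "E3" => EuclideanSpace ℝ (Fin 3)

/-- Two distinct-plane normals orthogonal to a 2D independent pair are parallel. -/
lemma aux_parallel {w1 w2 νi νj : E3} (hind : LinearIndependent ℝ ![w1, w2])
    (hνi : νi ≠ 0) (hi1 : ⟪νi, w1⟫ = 0) (hi2 : ⟪νi, w2⟫ = 0)
    (hj1 : ⟪νj, w1⟫ = 0) (hj2 : ⟪νj, w2⟫ = 0) : ∃ l : ℝ, νj = l • νi := by
  set W : Submodule ℝ E3 := Submodule.span ℝ {w1, w2} with hW
  have hmemW : ∀ x : E3, ⟪x, w1⟫ = 0 → ⟪x, w2⟫ = 0 → x ∈ Wᗮ := by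
    intro x h1 h2
    rw [Submodule.mem_orthogonal]
    intro u hu
    rw [Submodule.mem_span_pair] at hu
    obtain ⟨a, b, rfl⟩ := hu
    rw [real_inner_comm, inner_add_right, real_inner_smul_right, real_inner_smul_right,
      h1, h2]
    ring
  have hWrank : Module.finrank ℝ W = 2 := by
    have := finrank_span_eq_card (R := ℝ) hind
    have hr : Set.range ![w1, w2] = {w1, w2} := by
      simp [Matrix.range_cons, Matrix.range_empty]
      exact Set.pair_comm w2 w1
    rw [hr] at this
    rw [hW, this]
    simp
  have hperp : Module.finrank ℝ (Wᗮ : Submodule ℝ E3) = 1 := by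
    have h := Submodule.finrank_add_finrank_orthogonal (𝕜 := ℝ) W
    rw [hWrank] at h
    simp [finrank_euclideanSpace] at h
    omega
  have hi : Submodule.span ℝ {νi} = Wᗮ := by
    apply Submodule.eq_of_le_of_finrank_eq
    · rw [Submodule.span_le, Set.singleton_subset_iff]
      exact hmemW νi hi1 hi2
    · rw [hperp, finrank_span_singleton hνi]
  have hj : νj ∈ Submodule.span ℝ ({νi} : Set E3) := by
    rw [hi]; exact hmemW νj hj1 hj2
  obtain ⟨l, hl⟩ := Submodule.mem_span_singleton.mp hj
  exact ⟨l, hl.symm⟩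

/-- From a noncollinear triple, the difference vectors are linearly independent. -/
lemma aux_indep {p q r : E3} (h : ¬ Collinear ℝ ({p, q, r} : Set E3)) :
    LinearIndependent ℝ ![q - p, r - p] := by
  rw [linearIndependent_fin2]
  constructor
  · simp only [Matrix.cons_val_one, Matrix.head_cons]
    intro h0
    apply h
    have hrp : r = p := sub_eq_zero.mp h0
    have : ({p, q, r} : Set E3) = {p, q} := by
      rw [hrp]
      ext z; simp only [Set.mem_insert_iff, Set.mem_singleton_iff]; tauto
    rw [this]; exact collinear_pair ℝ p q
  · intro a hc
    simp only [Matrix.cons_val_one, Matrix.head_cons, Matrix.cons_val_zero] at hc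
    apply h
    rw [collinear_iff_of_mem (Set.mem_insert p {q, r})]
    refine ⟨r - p, ?_⟩
    intro z hz
    simp only [Set.mem_insert_iff, Set.mem_singleton_iff] at hz
    rcases hz with rfl | rfl | rfl
    · exact ⟨0, by simp⟩
    · exact ⟨a, by rw [hc]; simp⟩
    · exact ⟨1, by simp⟩


set_option maxHeartbeats 1000000 in
/-- Core lemma: at the extreme point `v` (max of `⟪ξ,·⟫` over the tight-for-`i` part of
the planar slice), if some point `q` of the slice lies strictly beyond, then some
constraint `j ≠ i` with `⟪ν j, d⟫ < 0` is tight at `v`. -/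
lemma aux_blocker {n : ℕ} (ν : Fin n → E3) (c : Fin n → ℝ) (ρ : E3) (r : ℝ)
    (i : Fin n) (d u ξ : E3)
    (hβi : ⟪ν i, d⟫ < 0)
    (hξu : 0 < ⟪ξ, u⟫) (hξd : ⟪ξ, d⟫ = 0)
    (hρu : ⟪ρ, u⟫ = 0) (hρd : ⟪ρ, d⟫ = 0)
    (v : E3) (hv : ∀ j, c j ≤ ⟪ν j, v⟫) (hvr : ⟪ρ, v⟫ = r) (hvt : ⟪ν i, v⟫ = c i)
    (hmax : ∀ p, (∀ j, c j ≤ ⟪ν j, p⟫) → ⟪ρ, p⟫ = r → ⟪ν i, p⟫ = c i → ⟪ξ, p⟫ ≤ ⟪ξ, v⟫)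
    (q : E3) (hq : ∀ j, c j ≤ ⟪ν j, q⟫) (hqr : ⟪ρ, q⟫ = r) (hqgt : ⟪ξ, v⟫ < ⟪ξ, q⟫)
    (a b : ℝ) (hab : q - v = a • u + b • d) :
    ∃ j, j ≠ i ∧ ⟪ν j, d⟫ < 0 ∧ ⟪ν j, v⟫ = c j := by
  set τ : E3 := (-⟪ν i, d⟫) • u + ⟪ν i, u⟫ • d with hτ
  have hτi : ⟪ν i, τ⟫ = 0 := by
    rw [hτ, inner_add_right, real_inner_smul_right, real_inner_smul_right]; ring
  have hτξ : 0 < ⟪ξ, τ⟫ := by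
    rw [hτ, inner_add_right, real_inner_smul_right, real_inner_smul_right, hξd]
    nlinarith
  have hτρ : ⟪ρ, τ⟫ = 0 := by
    rw [hτ, inner_add_right, real_inner_smul_right, real_inner_smul_right, hρu, hρd]; ring
  -- for every ε > 0, v + ε • τ violates some constraint
  have hviol : ∀ ε : ℝ, 0 < ε → ∃ j, ⟪ν j, v + ε • τ⟫ < c j := by
    intro ε hε
    by_contra hcon
    push_neg at hcon
    have h1 : ⟪ν i, v + ε • τ⟫ = c i := by
      rw [inner_add_right, real_inner_smul_right, hτi, hvt]; ring
    have h2 : ⟪ρ, v + ε • τ⟫ = r := by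
      rw [inner_add_right, real_inner_smul_right, hτρ, hvr]; ring
    have := hmax (v + ε • τ) hcon h2 h1
    rw [inner_add_right, real_inner_smul_right] at this
    nlinarith
  -- pigeonhole: a single j violated for arbitrarily small ε
  have hch : ∀ m : ℕ, ∃ j, ⟪ν j, v + (1 / (m + 1) : ℝ) • τ⟫ < c j := by
    intro m
    exact hviol _ (by positivity)
  choose f hf using hch
  obtain ⟨j, hjinf⟩ := Finite.exists_infinite_fiber f
  have hjinf' : Set.Infinite (f ⁻¹' {j}) := Set.infinite_coe_iff.mp hjinf
  -- j's key facts
  have hjτ : ⟪ν j, τ⟫ < 0 := by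
    obtain ⟨m, hm, _⟩ := hjinf'.exists_gt 0
    have hfm := hf m
    rw [Set.mem_preimage, Set.mem_singleton_iff] at hm
    rw [hm] at hfm
    rw [inner_add_right, real_inner_smul_right] at hfm
    have hle := hv j
    by_contra hcon
    push_neg at hcon
    have : (0:ℝ) < 1 / (m + 1) := by positivity
    nlinarith
  have hji : j ≠ i := by
    intro h; rw [h, hτi] at hjτ; exact lt_irrefl 0 hjτ
  have hjt : ⟪ν j, v⟫ = c j := by
    refine le_antisymm ?_ (hv j)
    by_contra hcon
    push_neg at hcon
    have hδpos : 0 < ⟪ν j, v⟫ - c j := sub_pos.mpr hcon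
    obtain ⟨M, hM⟩ := exists_nat_gt ((-⟪ν j, τ⟫) / (⟪ν j, v⟫ - c j))
    obtain ⟨m, hm, hmM⟩ := hjinf'.exists_gt M
    have hfm := hf m
    rw [Set.mem_preimage, Set.mem_singleton_iff] at hm
    rw [hm] at hfm
    rw [inner_add_right, real_inner_smul_right] at hfm
    have h1 : (0:ℝ) < (m:ℝ) + 1 := by positivity
    have h2 : (-⟪ν j, τ⟫) / (⟪ν j, v⟫ - c j) < (m:ℝ) + 1 := by
      have : (M:ℝ) < (m:ℝ) + 1 := by exact_mod_cast Nat.lt_succ_of_lt hmM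
      linarith
    have h3 : -⟪ν j, τ⟫ < ((m:ℝ) + 1) * (⟪ν j, v⟫ - c j) := by
      rw [div_lt_iff₀ hδpos, mul_comm] at h2
      linarith
    have h4 : (1 / ((m:ℝ) + 1)) * (-⟪ν j, τ⟫) < ⟪ν j, v⟫ - c j := by
      rw [div_mul_eq_mul_div, one_mul, div_lt_iff₀ h1]
      nlinarith
    nlinarith
  -- now show ⟪ν j, d⟫ < 0
  refine ⟨j, hji, ?_, hjt⟩
  by_contra hcon
  push_neg at hcon
  -- coordinates of q - v
  have hqa : ⟪ξ, q - v⟫ = a * ⟪ξ, u⟫ := by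
    rw [hab, inner_add_right, real_inner_smul_right, real_inner_smul_right, hξd]; ring
  have ha : 0 < a := by
    rw [inner_sub_right] at hqa
    nlinarith
  have hi2 : 0 ≤ a * ⟪ν i, u⟫ + b * ⟪ν i, d⟫ := by
    have h := hq i
    have : ⟪ν i, q - v⟫ = a * ⟪ν i, u⟫ + b * ⟪ν i, d⟫ := by
      rw [hab, inner_add_right, real_inner_smul_right, real_inner_smul_right]
    rw [inner_sub_right, hvt] at this
    linarith
  have hj2 : 0 ≤ a * ⟪ν j, u⟫ + b * ⟪ν j, d⟫ := by
    have h := hq j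
    have : ⟪ν j, q - v⟫ = a * ⟪ν j, u⟫ + b * ⟪ν j, d⟫ := by
      rw [hab, inner_add_right, real_inner_smul_right, real_inner_smul_right]
    rw [inner_sub_right, hjt] at this
    linarith
  have hD : -⟪ν i, d⟫ * ⟪ν j, u⟫ + ⟪ν i, u⟫ * ⟪ν j, d⟫ < 0 := by
    rw [hτ, inner_add_right, real_inner_smul_right, real_inner_smul_right] at hjτ
    linarith
  have k1 := mul_nonneg (neg_nonneg.mpr hβi.le) hj2
  have k2 := mul_nonneg hcon hi2
  have k3 := mul_neg_of_pos_of_neg ha hD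
  nlinarith [k1, k2, k3]


set_option maxHeartbeats 1000000 in
/-- On each planar slice there is a constraint `j ≠ i` with `⟪ν j, d⟫ < 0` tight
simultaneously with constraint `i` at some point of the slice. -/
lemma aux_slice {n : ℕ} (ν : Fin n → E3) (c : Fin n → ℝ) (ρ : E3) (r : ℝ)
    (i k : Fin n) (hki : k ≠ i) (d u ξ : E3)
    (hβi : ⟪ν i, d⟫ < 0) (hβk : ⟪ν k, d⟫ < 0)
    (hξu : 0 < ⟪ξ, u⟫) (hξd : ⟪ξ, d⟫ = 0)
    (hρu : ⟪ρ, u⟫ = 0) (hρd : ⟪ρ, d⟫ = 0)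
    (hspan : ∀ z : E3, ⟪ρ, z⟫ = 0 → ∃ a b : ℝ, z = a • u + b • d)
    (hcomp : IsCompact {z : E3 | (∀ l, c l ≤ ⟪ν l, z⟫) ∧ ⟪ν i, z⟫ = c i ∧ ⟪ρ, z⟫ = r})
    (pi : E3) (hpi : (∀ l, c l ≤ ⟪ν l, pi⟫) ∧ ⟪ν i, pi⟫ = c i ∧ ⟪ρ, pi⟫ = r)
    (pk : E3) (hpk : (∀ l, c l ≤ ⟪ν l, pk⟫) ∧ ⟪ν k, pk⟫ = c k ∧ ⟪ρ, pk⟫ = r) :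
    ∃ j v, j ≠ i ∧ ⟪ν j, d⟫ < 0 ∧ (∀ l, c l ≤ ⟪ν l, v⟫) ∧
      ⟪ν i, v⟫ = c i ∧ ⟪ν j, v⟫ = c j ∧ ⟪ρ, v⟫ = r := by
  set eI : Set E3 := {z : E3 | (∀ l, c l ≤ ⟪ν l, z⟫) ∧ ⟪ν i, z⟫ = c i ∧ ⟪ρ, z⟫ = r}
    with heI
  have hXcont : ContinuousOn (fun z : E3 => ⟪ξ, z⟫) eI :=
    (continuous_const.inner continuous_id).continuousOn
  obtain ⟨vM, hvM, hvMmax⟩ := hcomp.exists_isMaxOn ⟨pi, hpi⟩ hXcont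
  obtain ⟨vm, hvm, hvmmin⟩ := hcomp.exists_isMinOn ⟨pi, hpi⟩ hXcont
  rcases lt_or_ge ⟪ξ, vM⟫ ⟪ξ, pk⟫ with hR | hR
  · -- q strictly to the right of the maximal tight point
    obtain ⟨a, b, hab⟩ := hspan (pk - vM) (by rw [inner_sub_right, hvM.2.2, hpk.2.2]; ring)
    obtain ⟨j, hji, hjd, hjt⟩ := aux_blocker ν c ρ r i d u ξ hβi hξu hξd hρu hρd
      vM hvM.1 hvM.2.2 hvM.2.1
      (fun p h1 h2 h3 => hvMmax (⟨h1, h3, h2⟩ : p ∈ eI))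
      pk hpk.1 hpk.2.2 hR a b hab
    exact ⟨j, vM, hji, hjd, hvM.1, hvM.2.1, hjt, hvM.2.2⟩
  rcases lt_or_ge ⟪ξ, pk⟫ ⟪ξ, vm⟫ with hL | hL
  · -- q strictly to the left of the minimal tight point
    obtain ⟨a, b, hab⟩ := hspan (pk - vm) (by rw [inner_sub_right, hvm.2.2, hpk.2.2]; ring)
    have hab' : pk - vm = (-a) • (-u) + b • d := by rw [hab]; module
    obtain ⟨j, hji, hjd, hjt⟩ := aux_blocker ν c ρ r i d (-u) (-ξ) hβi
      (by rw [inner_neg_neg]; exact hξu) (by rw [inner_neg_left, hξd]; ring)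
      (by rw [inner_neg_right, hρu]; ring) hρd
      vm hvm.1 hvm.2.2 hvm.2.1
      (fun p h1 h2 h3 => by
        have h4 := hvmmin (⟨h1, h3, h2⟩ : p ∈ eI)
        simp only [Set.mem_setOf_eq] at h4
        simp only [inner_neg_left]
        linarith)
      pk hpk.1 hpk.2.2
      (by simp only [inner_neg_left]; linarith) (-a) b hab'
    exact ⟨j, vm, hji, hjd, hvm.1, hvm.2.1, hjt, hvm.2.2⟩
  · -- middle case: pk is itself tight for i
    have hAB : ⟪ξ, vm⟫ ≤ ⟪ξ, vM⟫ := le_trans hL hR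
    -- find w on the segment [vm, vM] with the same ξ-coordinate as pk
    obtain ⟨w, hw, hwX⟩ :
        ∃ w, w ∈ eI ∧ ⟪ξ, w⟫ = ⟪ξ, pk⟫ := by
      rcases eq_or_lt_of_le hAB with heq | hlt
      · exact ⟨vm, hvm, by linarith⟩
      · set t : ℝ := (⟪ξ, pk⟫ - ⟪ξ, vm⟫) / (⟪ξ, vM⟫ - ⟪ξ, vm⟫) with ht
        have hden : 0 < ⟪ξ, vM⟫ - ⟪ξ, vm⟫ := by linarith
        have ht0 : 0 ≤ t := div_nonneg (by linarith) hden.le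
        have ht1 : t ≤ 1 := by
          rw [ht, div_le_one hden]; linarith
        refine ⟨vm + t • (vM - vm), ⟨?_, ?_, ?_⟩, ?_⟩
        · intro l
          have h1 := hvm.1 l
          have h2 := hvM.1 l
          rw [inner_add_right, real_inner_smul_right, inner_sub_right]
          nlinarith [mul_nonneg ht0 (by linarith : (0:ℝ) ≤ ⟪ν l, vM⟫ - c l),
            mul_nonneg (by linarith : (0:ℝ) ≤ 1 - t)
              (by linarith : (0:ℝ) ≤ ⟪ν l, vm⟫ - c l)]
        · rw [inner_add_right, real_inner_smul_right, inner_sub_right, hvm.2.1, hvM.2.1]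
          ring
        · rw [inner_add_right, real_inner_smul_right, inner_sub_right, hvm.2.2, hvM.2.2]
          ring
        · rw [inner_add_right, real_inner_smul_right, inner_sub_right, ht,
            div_mul_cancel₀ _ (ne_of_gt hden)]
          ring
    -- pk - w is vertical, then squeeze
    obtain ⟨a, b, hab⟩ := hspan (pk - w) (by rw [inner_sub_right, hw.2.2, hpk.2.2]; ring)
    have hXab : ⟪ξ, pk - w⟫ = a * ⟪ξ, u⟫ := by
      rw [hab, inner_add_right, real_inner_smul_right, real_inner_smul_right, hξd]; ring
    have ha : a = 0 := by
      rw [inner_sub_right, hwX] at hXab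
      have : a * ⟪ξ, u⟫ = 0 := by linarith
      rcases mul_eq_zero.mp this with h | h
      · exact h
      · exact absurd h (ne_of_gt hξu)
    have hvert : pk - w = b • d := by rw [hab, ha]; module
    have hb1 : b * ⟪ν i, d⟫ ≥ 0 := by
      have h1 := hpk.1 i
      have : ⟪ν i, pk - w⟫ = b * ⟪ν i, d⟫ := by rw [hvert, real_inner_smul_right]
      rw [inner_sub_right, hw.2.1] at this
      linarith
    have hb2 : b * ⟪ν k, d⟫ ≤ 0 := by
      have h1 := hw.1 k
      have : ⟪ν k, pk - w⟫ = b * ⟪ν k, d⟫ := by rw [hvert, real_inner_smul_right]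
      rw [inner_sub_right, hpk.2.1] at this
      linarith
    have hb : b = 0 := by nlinarith
    have hpkw : pk = w := by
      have : pk - w = 0 := by rw [hvert, hb]; module
      have := sub_eq_zero.mp this; exact this
    refine ⟨k, pk, hki, hβk, hpk.1, ?_, hpk.2.1, hpk.2.2⟩
    rw [hpkw]; exact hw.2.1


/-- Averaging points of a face: the centroid keeps all inequalities, keeps tight the
constraints tight at every point, and is strict wherever some point is strict. -/
lemma aux_centroid {n : ℕ} (ν : Fin n → E3) (c : Fin n → ℝ) (T : Finset (Fin n))
    (hT : T.Nonempty) (g : Fin n → E3)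
    (h1 : ∀ j ∈ T, ∀ l, c l ≤ ⟪ν l, g j⟫) :
    (∀ l, c l ≤ ⟪ν l, (T.card : ℝ)⁻¹ • ∑ j ∈ T, g j⟫) ∧
    (∀ l, (∀ j ∈ T, ⟪ν l, g j⟫ = c l) → ⟪ν l, (T.card : ℝ)⁻¹ • ∑ j ∈ T, g j⟫ = c l) ∧
    (∀ l, (∃ j ∈ T, c l < ⟪ν l, g j⟫) → c l < ⟪ν l, (T.card : ℝ)⁻¹ • ∑ j ∈ T, g j⟫) := by
  have hcard : 0 < (T.card : ℝ) := by
    have := Finset.card_pos.mpr hT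
    exact_mod_cast this
  have hin : ∀ l, ⟪ν l, (T.card : ℝ)⁻¹ • ∑ j ∈ T, g j⟫
      = (T.card : ℝ)⁻¹ * ∑ j ∈ T, ⟪ν l, g j⟫ := by
    intro l
    rw [real_inner_smul_right, inner_sum]
  refine ⟨?_, ?_, ?_⟩
  · intro l
    have hsum : (T.card : ℝ) * c l ≤ ∑ j ∈ T, ⟪ν l, g j⟫ := by
      have := Finset.card_nsmul_le_sum T (fun j => ⟪ν l, g j⟫) (c l) (fun j hj => h1 j hj l)
      rwa [nsmul_eq_mul] at this
    rw [hin l]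
    rw [ge_iff_le.symm] at hsum ⊢
    calc c l = (T.card : ℝ)⁻¹ * ((T.card : ℝ) * c l) := by field_simp
    _ ≤ (T.card : ℝ)⁻¹ * ∑ j ∈ T, ⟪ν l, g j⟫ :=
        mul_le_mul_of_nonneg_left hsum (by positivity)
  · intro l hl
    rw [hin l, Finset.sum_congr rfl (fun j hj => hl j hj), Finset.sum_const, nsmul_eq_mul]
    field_simp
  · intro l hl
    have hsum : (T.card : ℝ) * c l < ∑ j ∈ T, ⟪ν l, g j⟫ := by
      have := Finset.sum_lt_sum (f := fun _ => c l) (g := fun j => ⟪ν l, g j⟫)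
        (fun j hj => h1 j hj l) hl
      rwa [Finset.sum_const, nsmul_eq_mul] at this
    rw [hin l]
    calc c l = (T.card : ℝ)⁻¹ * ((T.card : ℝ) * c l) := by field_simp
    _ < (T.card : ℝ)⁻¹ * ∑ j ∈ T, ⟪ν l, g j⟫ :=
        mul_lt_mul_of_pos_left hsum (by positivity)


/-- If constraint `j` is tight on all of a 2-dimensional face with tight constraint `m`,
then `ν j` is a positive multiple of `ν m`. -/
lemma aux_dup {νm νj : E3} {cm cj : ℝ} {S : Set E3} (hνm : νm ≠ 0) (hνj : νj ≠ 0)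
    (h3 : ∃ x ∈ S, ∃ y ∈ S, ∃ z ∈ S, ¬ Collinear ℝ ({x, y, z} : Set E3))
    (hm : ∀ p ∈ S, ⟪νm, p⟫ = cm) (hj : ∀ p ∈ S, ⟪νj, p⟫ = cj)
    (w : E3) (hwm : cm < ⟪νm, w⟫) (hwj : cj < ⟪νj, w⟫) :
    ∃ l : ℝ, 0 < l ∧ νj = l • νm ∧ cj = l * cm := by
  obtain ⟨x, hx, y, hy, z, hz, hncol⟩ := h3
  have hind := aux_indep hncol
  obtain ⟨l, hl⟩ := aux_parallel hind hνm
    (by rw [inner_sub_right, hm y hy, hm x hx]; ring)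
    (by rw [inner_sub_right, hm z hz, hm x hx]; ring)
    (by rw [inner_sub_right, hj y hy, hj x hx]; ring)
    (by rw [inner_sub_right, hj z hz, hj x hx]; ring)
  have hl0 : l ≠ 0 := by
    rintro rfl; rw [zero_smul] at hl; exact hνj hl
  have hcj : cj = l * cm := by
    have h1 := hj x hx
    have h2 := hm x hx
    rw [hl, real_inner_smul_left] at h1
    rw [← h1, h2]
  have hlpos : 0 < l := by
    rcases lt_or_gt_of_ne hl0 with h | h
    · exfalso
      have : ⟪νj, w⟫ = l * ⟪νm, w⟫ := by rw [hl, real_inner_smul_left]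
      nlinarith
    · exact h
  exact ⟨l, hlpos, hl, hcj⟩




set_option maxHeartbeats 2000000 in
/-- For a bounded convex polytope, direction `d` is a valid pull-out
direction for facet `F i` iff the half-space conditions hold for the
edge-neighboring facets of `F i` alone. -/
theorem valid_iff_valid_on_neighbors (n : ℕ)
    (ν : Fin n → EuclideanSpace ℝ (Fin 3)) (c : Fin n → ℝ) (hν : ∀ i, ν i ≠ 0)
    (P : Set (EuclideanSpace ℝ (Fin 3)))
    (hP : P = ⋂ j, {x | c j ≤ ⟪ν j, x⟫})
    (hbd : Bornology.IsBounded P) (hint : (interior P).Nonempty)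
    (F : Fin n → Set (EuclideanSpace ℝ (Fin 3)))
    (hF : ∀ j, F j = {x ∈ P | ⟪ν j, x⟫ = c j})
    (hfacet : ∀ j, ∃ x ∈ F j, ∃ y ∈ F j, ∃ z ∈ F j,
      ¬ Collinear ℝ ({x, y, z} : Set (EuclideanSpace ℝ (Fin 3))))
    (i : Fin n) (d : EuclideanSpace ℝ (Fin 3)) (hd : ‖d‖ = 1) :
    (⟪ν i, d⟫ < 0 ∧ ∀ j, j ≠ i → 0 ≤ ⟪ν j, d⟫) ↔
      (⟪ν i, d⟫ < 0 ∧ ∀ j, j ≠ i →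
        (∃ p q, p ≠ q ∧ p ∈ F i ∩ F j ∧ q ∈ F i ∩ F j) → 0 ≤ ⟪ν j, d⟫) := by
  classical
  constructor
  · rintro ⟨h1, h2⟩
    exact ⟨h1, fun j hj _ => h2 j hj⟩
  rintro ⟨hβi, hnb⟩
  refine ⟨hβi, ?_⟩
  intro k hki
  by_contra hk
  push_neg at hk
  -- basic facts about P and F
  have hPmem : ∀ x : E3, x ∈ P ↔ ∀ j, c j ≤ ⟪ν j, x⟫ := by
    intro x; rw [hP, Set.mem_iInter]; rfl
  have hFmem : ∀ j, ∀ x : E3, x ∈ F j ↔ ((∀ l, c l ≤ ⟪ν l, x⟫) ∧ ⟪ν j, x⟫ = c j) := by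
    intro j x; rw [hF j]; constructor
    · rintro ⟨h1, h2⟩; exact ⟨(hPmem x).mp h1, h2⟩
    · rintro ⟨h1, h2⟩; exact ⟨(hPmem x).mpr h1, h2⟩
  -- interior points are strictly feasible
  obtain ⟨w, hw⟩ := hint
  have hwstrict : ∀ j, c j < ⟪ν j, w⟫ := by
    intro j
    obtain ⟨ε, hε, hball⟩ := Metric.isOpen_iff.mp isOpen_interior w hw
    have hb : w - (ε / (2 * ‖ν j‖)) • ν j ∈ P :=
      interior_subset (hball (by
        rw [Metric.mem_ball, dist_eq_norm]
        have : w - (ε / (2 * ‖ν j‖)) • ν j - w = -((ε / (2 * ‖ν j‖)) • ν j) := by abel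
        rw [this, norm_neg, norm_smul]
        have hν0 : 0 < ‖ν j‖ := norm_pos_iff.mpr (hν j)
        rw [Real.norm_eq_abs, abs_of_pos (by positivity)]
        rw [div_mul_eq_mul_div, div_lt_iff₀ (by positivity)]
        nlinarith))
    have h1 := (hPmem _).mp hb j
    rw [inner_sub_right, real_inner_smul_right, real_inner_self_eq_norm_sq] at h1
    have hν0 : 0 < ‖ν j‖ := norm_pos_iff.mpr (hν j)
    have h2 : 0 < ε / (2 * ‖ν j‖) * ‖ν j‖ ^ 2 := by positivity
    have h3 := (hPmem _).mp (interior_subset hw) j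
    linarith
  -- duplicates of facet i are impossible; duplicates of facet k are positive multiples
  have hdupi : ∀ j : Fin n, (∀ p ∈ F i, ⟪ν j, p⟫ = c j) → j = i := by
    intro j hj
    by_contra hji
    have htight_i : ∀ p ∈ F i, ⟪ν i, p⟫ = c i := fun p hp => ((hFmem i p).mp hp).2
    obtain ⟨l, hl, hlmul, hlc⟩ := aux_dup (hν i) (hν j) (hfacet i) htight_i hj w
      (hwstrict i) (hwstrict j)
    -- j is then an edge-neighbor of i, so ⟪ν j, d⟫ ≥ 0, but it is l • ν i with l > 0
    obtain ⟨x, hx, y, hy, z, hz, hncol⟩ := hfacet i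
    have hxy : x ≠ y := by
      rintro rfl
      exact hncol (by
        have : ({x, x, z} : Set E3) = {x, z} := by
          ext t; simp only [Set.mem_insert_iff, Set.mem_singleton_iff]; tauto
        rw [this]; exact collinear_pair ℝ x z)
    have hmemj : ∀ p ∈ F i, p ∈ F j := by
      intro p hp
      exact (hFmem j p).mpr ⟨((hFmem i p).mp hp).1, hj p hp⟩
    have := hnb j hji ⟨x, y, hxy, ⟨hx, hmemj x hx⟩, ⟨hy, hmemj y hy⟩⟩
    rw [hlmul, real_inner_smul_left] at this
    nlinarith
  have hdupk : ∀ j : Fin n, (∀ p ∈ F k, ⟪ν j, p⟫ = c j) →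
      j ≠ i ∧ ∃ l : ℝ, 0 < l ∧ ν j = l • ν k := by
    intro j hj
    have htight_k : ∀ p ∈ F k, ⟪ν k, p⟫ = c k := fun p hp => ((hFmem k p).mp hp).2
    obtain ⟨l, hl, hlmul, hlc⟩ := aux_dup (hν k) (hν j) (hfacet k) htight_k hj w
      (hwstrict k) (hwstrict j)
    constructor
    · intro hji
      -- F k ⊆ F i would make k an edge-neighbor of i
      have hj' : ∀ p ∈ F k, ⟪ν i, p⟫ = c i := by rw [← hji]; exact hj
      obtain ⟨x, hx, y, hy, z, hz, hncol⟩ := hfacet k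
      have hxy : x ≠ y := by
        rintro rfl
        exact hncol (by
          have : ({x, x, z} : Set E3) = {x, z} := by
            ext t; simp only [Set.mem_insert_iff, Set.mem_singleton_iff]; tauto
          rw [this]; exact collinear_pair ℝ x z)
      have hmemi : ∀ p ∈ F k, p ∈ F i := by
        intro p hp
        exact (hFmem i p).mpr ⟨((hFmem k p).mp hp).1, hj' p hp⟩
      have := hnb k hki ⟨x, y, hxy, ⟨hmemi x hx, hx⟩, ⟨hmemi y hy, hy⟩⟩
      linarith
    · exact ⟨l, hl, hlmul⟩
  -- construct x₀ in the relative interior of F i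
  obtain ⟨x₀, hx₀F, hx₀strict⟩ :
      ∃ x₀, x₀ ∈ F i ∧ ∀ l, l ≠ i → c l < ⟪ν l, x₀⟫ := by
    have hch : ∀ j : Fin n, ∃ p, p ∈ F i ∧ (j ≠ i → c j < ⟪ν j, p⟫) := by
      intro j
      by_cases hji : j = i
      · obtain ⟨x, hx, -⟩ := hfacet i
        exact ⟨x, hx, fun h => absurd hji h⟩
      · have : ∃ p ∈ F i, c j < ⟪ν j, p⟫ := by
          by_contra hcon
          push_neg at hcon
          have htight : ∀ p ∈ F i, ⟪ν j, p⟫ = c j := fun p hp =>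
            le_antisymm (hcon p hp) (((hFmem i p).mp hp).1 j)
          exact hji (hdupi j htight)
        obtain ⟨p, hp, hps⟩ := this
        exact ⟨p, hp, fun _ => hps⟩
    choose g hg1 hg2 using hch
    set T : Finset (Fin n) := Finset.univ.erase i with hT
    have hTne : T.Nonempty := ⟨k, Finset.mem_erase.mpr ⟨hki, Finset.mem_univ k⟩⟩
    obtain ⟨hA, hB, hC⟩ := aux_centroid ν c T hTne g
      (fun j _ l => ((hFmem i (g j)).mp (hg1 j)).1 l)
    refine ⟨(T.card : ℝ)⁻¹ • ∑ j ∈ T, g j, (hFmem i _).mpr ⟨hA, ?_⟩, fun l hl => ?_⟩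
    · exact hB i (fun j _ => ((hFmem i (g j)).mp (hg1 j)).2)
    · exact hC l ⟨l, Finset.mem_erase.mpr ⟨hl, Finset.mem_univ l⟩, hg2 l hl⟩
  -- construct y₀ in the relative interior of F k
  obtain ⟨y₀, hy₀F, hy₀strict⟩ :
      ∃ y₀, y₀ ∈ F k ∧ ∀ l, l ≠ k → ¬ (∀ p ∈ F k, ⟪ν l, p⟫ = c l) → c l < ⟪ν l, y₀⟫ := by
    set T2 : Finset (Fin n) :=
      Finset.univ.filter (fun l => l ≠ k ∧ ¬ (∀ p ∈ F k, ⟪ν l, p⟫ = c l)) with hT2def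
    by_cases hT2 : T2.Nonempty
    · have hch : ∀ l : Fin n, ∃ p, p ∈ F k ∧
          ((l ≠ k ∧ ¬ (∀ p ∈ F k, ⟪ν l, p⟫ = c l)) → c l < ⟪ν l, p⟫) := by
        intro l
        by_cases hc : l ≠ k ∧ ¬ (∀ p ∈ F k, ⟪ν l, p⟫ = c l)
        · have := hc.2
          push_neg at this
          obtain ⟨p, hp, hne⟩ := this
          exact ⟨p, hp, fun _ =>
            lt_of_le_of_ne (((hFmem k p).mp hp).1 l) (Ne.symm hne)⟩
        · obtain ⟨x, hx, -⟩ := hfacet k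
          exact ⟨x, hx, fun h => absurd h hc⟩
      choose g2 hg21 hg22 using hch
      obtain ⟨hA, hB, hC⟩ := aux_centroid ν c T2 hT2 g2
        (fun j _ l => ((hFmem k (g2 j)).mp (hg21 j)).1 l)
      refine ⟨(T2.card : ℝ)⁻¹ • ∑ j ∈ T2, g2 j, (hFmem k _).mpr ⟨hA, ?_⟩,
        fun l hl1 hl2 => ?_⟩
      · exact hB k (fun j _ => ((hFmem k (g2 j)).mp (hg21 j)).2)
      · refine hC l ⟨l, ?_, hg22 l ⟨hl1, hl2⟩⟩
        rw [hT2def, Finset.mem_filter]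
        exact ⟨Finset.mem_univ l, hl1, hl2⟩
    · obtain ⟨x, hx, -⟩ := hfacet k
      refine ⟨x, hx, fun l hl1 hl2 => ?_⟩
      exfalso
      exact hT2 ⟨l, by rw [hT2def, Finset.mem_filter]; exact ⟨Finset.mem_univ l, hl1, hl2⟩⟩
  -- key scalar facts
  have hx₀i : ⟪ν i, x₀⟫ = c i := ((hFmem i x₀).mp hx₀F).2
  have hy₀k : ⟪ν k, y₀⟫ = c k := ((hFmem k y₀).mp hy₀F).2
  have hy₀i : c i < ⟪ν i, y₀⟫ := by
    refine hy₀strict i (Ne.symm hki) ?_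
    intro hdup
    exact (hdupk i hdup).1 rfl
  set u : E3 := y₀ - x₀ with hu
  have hαi : 0 < ⟪ν i, u⟫ := by
    rw [hu, inner_sub_right, hx₀i]; linarith
  have hαk : ⟪ν k, u⟫ < 0 := by
    rw [hu, inner_sub_right, hy₀k]
    have := hx₀strict k hki; linarith
  have hd0 : d ≠ 0 := by
    intro h; rw [h] at hd; simp at hd
  have hnepair : ∀ a : ℝ, a • d ≠ u := by
    intro a hau
    have h1 : ⟪ν i, u⟫ = a * ⟪ν i, d⟫ := by rw [← hau, real_inner_smul_right]
    have h2 : ⟪ν k, u⟫ = a * ⟪ν k, d⟫ := by rw [← hau, real_inner_smul_right]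
    rcases lt_trichotomy a 0 with h | h | h
    · nlinarith
    · nlinarith
    · nlinarith
  have hind : LinearIndependent ℝ ![u, d] := by
    rw [linearIndependent_fin2]
    constructor
    · simpa using hd0
    · intro a
      simpa using hnepair a
  -- orthogonal direction ρ
  set W : Submodule ℝ E3 := Submodule.span ℝ {u, d} with hW
  have hWrank : Module.finrank ℝ W = 2 := by
    have h := finrank_span_eq_card (R := ℝ) hind
    have hr : Set.range ![u, d] = {u, d} := by
      simp [Matrix.range_cons, Matrix.range_empty]
      exact Set.pair_comm d u
    rw [hr] at h
    rw [hW, h]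
    simp
  have hWperp : Module.finrank ℝ (Wᗮ : Submodule ℝ E3) = 1 := by
    have h := Submodule.finrank_add_finrank_orthogonal (𝕜 := ℝ) W
    rw [hWrank] at h
    simp [finrank_euclideanSpace] at h
    omega
  have hWne : (Wᗮ : Submodule ℝ E3) ≠ ⊥ := by
    intro h
    rw [h, finrank_bot] at hWperp
    omega
  obtain ⟨ρ, hρW, hρ0⟩ := (Submodule.ne_bot_iff (Wᗮ : Submodule ℝ E3)).mp hWne
  have hρu : ⟪ρ, u⟫ = 0 := by
    have := (Submodule.mem_orthogonal _ _).mp hρW u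
      (Submodule.subset_span (Set.mem_insert u {d}))
    rw [real_inner_comm]; exact this
  have hρd : ⟪ρ, d⟫ = 0 := by
    have := (Submodule.mem_orthogonal _ _).mp hρW d
      (Submodule.subset_span (Set.mem_insert_of_mem u rfl))
    rw [real_inner_comm]; exact this
  have hρρ : 0 < ⟪ρ, ρ⟫ := lt_of_le_of_ne real_inner_self_nonneg (Ne.symm (inner_self_ne_zero.mpr hρ0))
  have hspan : ∀ z : E3, ⟪ρ, z⟫ = 0 → ∃ a b : ℝ, z = a • u + b • d := by
    have hρspan : Submodule.span ℝ {ρ} = (Wᗮ : Submodule ℝ E3) :=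
      Submodule.eq_of_le_of_finrank_eq
        (by rw [Submodule.span_le, Set.singleton_subset_iff]; exact hρW)
        (by rw [finrank_span_singleton hρ0, hWperp])
    intro z hz
    have hzW : z ∈ W := by
      rw [← Submodule.orthogonal_orthogonal W, ← hρspan, Submodule.mem_orthogonal]
      intro x hx
      obtain ⟨a, rfl⟩ := Submodule.mem_span_singleton.mp hx
      rw [real_inner_smul_left, hz]; ring
    obtain ⟨a, b, hab⟩ := Submodule.mem_span_pair.mp (by rw [hW] at hzW; exact hzW)
    exact ⟨a, b, hab.symm⟩
  -- the in-plane coordinate functional ξ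
  have hdd : ⟪d, d⟫ = 1 := by
    rw [real_inner_self_eq_norm_mul_norm, hd]; ring
  set ξ : E3 := u - ⟪u, d⟫ • d with hξ
  have hξd : ⟪ξ, d⟫ = 0 := by
    rw [hξ, inner_sub_left, real_inner_smul_left, hdd]; ring
  have hξ0 : ξ ≠ 0 := by
    intro h
    rw [hξ, sub_eq_zero] at h
    exact hnepair ⟪u, d⟫ h.symm
  have hξu : 0 < ⟪ξ, u⟫ := by
    have huξ : u = ξ + ⟪u, d⟫ • d := by rw [hξ]; abel
    have : ⟪ξ, u⟫ = ⟪ξ, ξ⟫ := by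
      conv_lhs => rw [huξ]
      rw [inner_add_right, real_inner_smul_right, hξd]; ring
    rw [this]
    exact lt_of_le_of_ne real_inner_self_nonneg (Ne.symm (inner_self_ne_zero.mpr hξ0))
  -- translation directions inside the facets
  set wi : E3 := ρ - (⟪ν i, ρ⟫ / ⟪ν i, u⟫) • u with hwi
  have hwii : ⟪ν i, wi⟫ = 0 := by
    have hne : ⟪ν i, u⟫ ≠ 0 := ne_of_gt hαi
    rw [hwi, inner_sub_right, real_inner_smul_right, div_mul_cancel₀ _ hne, sub_self]
  have hρwi : ⟪ρ, wi⟫ = ⟪ρ, ρ⟫ := by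
    rw [hwi, inner_sub_right, real_inner_smul_right, hρu]; ring
  set wk : E3 := ρ - (⟪ν k, ρ⟫ / ⟪ν k, u⟫) • u with hwk
  have hwkk : ⟪ν k, wk⟫ = 0 := by
    have hne : ⟪ν k, u⟫ ≠ 0 := ne_of_lt hαk
    rw [hwk, inner_sub_right, real_inner_smul_right, div_mul_cancel₀ _ hne, sub_self]
  have hρwk : ⟪ρ, wk⟫ = ⟪ρ, ρ⟫ := by
    rw [hwk, inner_sub_right, real_inner_smul_right, hρu]; ring
  have hρy₀ : ⟪ρ, y₀⟫ = ⟪ρ, x₀⟫ := by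
    have h1 : ⟪ρ, y₀ - x₀⟫ = 0 := hρu
    rw [inner_sub_right] at h1; linarith
  -- choose δ > 0 making the translated points stay on their facets
  set δ1 : Fin n → ℝ := fun l =>
    if l = i then 1 else (⟪ν l, x₀⟫ - c l) / (|⟪ν l, wi⟫| + 1) with hδ1
  set δ2 : Fin n → ℝ := fun l =>
    if (l = k ∨ (∀ p ∈ F k, ⟪ν l, p⟫ = c l)) then 1
    else (⟪ν l, y₀⟫ - c l) / (|⟪ν l, wk⟫| + 1) with hδ2
  have hunine : (Finset.univ : Finset (Fin n)).Nonempty := ⟨i, Finset.mem_univ i⟩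
  set δ : ℝ := min (Finset.univ.inf' hunine δ1) (Finset.univ.inf' hunine δ2) with hδ
  have hδpos : 0 < δ := by
    rw [hδ, lt_min_iff]
    constructor
    · rw [Finset.lt_inf'_iff]
      intro l _
      simp only [hδ1]
      by_cases h : l = i
      · simp [h]
      · simp only [h, if_false]
        exact div_pos (by have := hx₀strict l h; linarith) (by positivity)
    · rw [Finset.lt_inf'_iff]
      intro l _
      simp only [hδ2]
      by_cases h : l = k ∨ (∀ p ∈ F k, ⟪ν l, p⟫ = c l)
      · rw [if_pos h]; exact one_pos
      · simp only [h, if_false]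
        exact div_pos
          (by have := hy₀strict l (not_or.mp h).1 (not_or.mp h).2; linarith)
          (by positivity)
  have hδle1 : ∀ l, δ ≤ δ1 l := fun l =>
    le_trans (min_le_left _ _) (Finset.inf'_le δ1 (Finset.mem_univ l))
  have hδle2 : ∀ l, δ ≤ δ2 l := fun l =>
    le_trans (min_le_right _ _) (Finset.inf'_le δ2 (Finset.mem_univ l))
  -- the translated points
  have hpis : ∀ s : ℝ, 0 < s → s < δ →
      (∀ l, c l ≤ ⟪ν l, x₀ + s • wi⟫) ∧ ⟪ν i, x₀ + s • wi⟫ = c i ∧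
        ⟪ρ, x₀ + s • wi⟫ = ⟪ρ, x₀⟫ + s * ⟪ρ, ρ⟫ := by
    intro s hs hsδ
    refine ⟨?_, ?_, ?_⟩
    · intro l
      rw [inner_add_right, real_inner_smul_right]
      by_cases h : l = i
      · rw [h, hx₀i, hwii]; simp
      · have hgap := hx₀strict l h
        have hle : s < (⟪ν l, x₀⟫ - c l) / (|⟪ν l, wi⟫| + 1) := by
          have h2 := hδle1 l
          simp only [hδ1] at h2
          rw [if_neg h] at h2
          linarith
        have he2 : s * (|⟪ν l, wi⟫| + 1) < ⟪ν l, x₀⟫ - c l := by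
          rw [← lt_div_iff₀ (by positivity)]
          exact hle
        have he1 : s * -|⟪ν l, wi⟫| ≤ s * ⟪ν l, wi⟫ :=
          mul_le_mul_of_nonneg_left (neg_abs_le _) hs.le
        nlinarith
    · rw [inner_add_right, real_inner_smul_right, hwii, hx₀i]; ring
    · rw [inner_add_right, real_inner_smul_right, hρwi]
  have hpks : ∀ s : ℝ, 0 < s → s < δ →
      (∀ l, c l ≤ ⟪ν l, y₀ + s • wk⟫) ∧ ⟪ν k, y₀ + s • wk⟫ = c k ∧
        ⟪ρ, y₀ + s • wk⟫ = ⟪ρ, x₀⟫ + s * ⟪ρ, ρ⟫ := by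
    intro s hs hsδ
    refine ⟨?_, ?_, ?_⟩
    · intro l
      rw [inner_add_right, real_inner_smul_right]
      by_cases h : l = k ∨ (∀ p ∈ F k, ⟪ν l, p⟫ = c l)
      · rcases h with h | h
        · rw [h, hy₀k, hwkk]; simp
        · obtain ⟨-, l', hl', hmul⟩ := hdupk l h
          have h1 : ⟪ν l, y₀⟫ = c l := h y₀ hy₀F
          have h2 : ⟪ν l, wk⟫ = 0 := by
            rw [hmul, real_inner_smul_left, hwkk]; ring
          rw [h1, h2]; simp
      · have hgap := hy₀strict l (not_or.mp h).1 (not_or.mp h).2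
        have hle : s < (⟪ν l, y₀⟫ - c l) / (|⟪ν l, wk⟫| + 1) := by
          have h2 := hδle2 l
          simp only [hδ2] at h2
          rw [if_neg h] at h2
          linarith
        have he2 : s * (|⟪ν l, wk⟫| + 1) < ⟪ν l, y₀⟫ - c l := by
          rw [← lt_div_iff₀ (by positivity)]
          exact hle
        have he1 : s * -|⟪ν l, wk⟫| ≤ s * ⟪ν l, wk⟫ :=
          mul_le_mul_of_nonneg_left (neg_abs_le _) hs.le
        nlinarith
    · rw [inner_add_right, real_inner_smul_right, hwkk, hy₀k]; ring
    · rw [inner_add_right, real_inner_smul_right, hρwk, hρy₀]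
  -- compactness of the tight slices
  have hPclosed : IsClosed P := by
    rw [hP]
    exact isClosed_iInter (fun j =>
      isClosed_le continuous_const (continuous_const.inner continuous_id))
  have hPcomp : IsCompact P := Metric.isCompact_of_isClosed_isBounded hPclosed hbd
  have hcomp : ∀ R : ℝ,
      IsCompact {z : E3 | (∀ l, c l ≤ ⟪ν l, z⟫) ∧ ⟪ν i, z⟫ = c i ∧ ⟪ρ, z⟫ = R} := by
    intro R
    have heq : {z : E3 | (∀ l, c l ≤ ⟪ν l, z⟫) ∧ ⟪ν i, z⟫ = c i ∧ ⟪ρ, z⟫ = R}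
        = P ∩ {z : E3 | ⟪ν i, z⟫ = c i ∧ ⟪ρ, z⟫ = R} := by
      ext z
      simp only [Set.mem_setOf_eq, Set.mem_inter_iff, hPmem z]
    rw [heq]
    exact hPcomp.inter_right
      (IsClosed.inter
        (isClosed_eq (continuous_const.inner continuous_id) continuous_const)
        (isClosed_eq (continuous_const.inner continuous_id) continuous_const))
  -- apply the slice lemma for every s ∈ (0, δ)
  have Φ : ∀ s : ↥(Set.Ioo (0:ℝ) δ), ∃ j v, j ≠ i ∧ ⟪ν j, d⟫ < 0 ∧
      (∀ l, c l ≤ ⟪ν l, v⟫) ∧ ⟪ν i, v⟫ = c i ∧ ⟪ν j, v⟫ = c j ∧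
      ⟪ρ, v⟫ = ⟪ρ, x₀⟫ + (s : ℝ) * ⟪ρ, ρ⟫ := by
    rintro ⟨s, hs0, hsδ⟩
    obtain ⟨hpi1, hpi2, hpi3⟩ := hpis s hs0 hsδ
    obtain ⟨hpk1, hpk2, hpk3⟩ := hpks s hs0 hsδ
    exact aux_slice ν c ρ (⟪ρ, x₀⟫ + s * ⟪ρ, ρ⟫) i k hki d u ξ hβi hk hξu hξd hρu hρd
      hspan (hcomp _) (x₀ + s • wi) ⟨hpi1, hpi2, hpi3⟩ (y₀ + s • wk) ⟨hpk1, hpk2, hpk3⟩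
  choose J V hJ1 hJ2 hJ3 hJ4 hJ5 hJ6 using Φ
  haveI : Infinite ↥(Set.Ioo (0:ℝ) δ) := Set.Ioo.infinite hδpos
  obtain ⟨j, hjfib⟩ := Finite.exists_infinite_fiber J
  haveI := hjfib
  obtain ⟨a, b, hab⟩ := exists_pair_ne ↥(J ⁻¹' {j})
  have hja : J a.val = j := by
    have := a.property
    rwa [Set.mem_preimage, Set.mem_singleton_iff] at this
  have hjb : J b.val = j := by
    have := b.property
    rwa [Set.mem_preimage, Set.mem_singleton_iff] at this
  have hsne : ((a.val : ℝ)) ≠ ((b.val : ℝ)) := by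
    intro h
    exact hab (Subtype.ext (Subtype.ext h))
  have hvne : V a.val ≠ V b.val := by
    intro h
    apply hsne
    have h1 := hJ6 a.val
    have h2 := hJ6 b.val
    rw [h] at h1
    have : (a.val : ℝ) * ⟪ρ, ρ⟫ = (b.val : ℝ) * ⟪ρ, ρ⟫ := by linarith
    exact mul_right_cancel₀ (ne_of_gt hρρ) this
  have hji : j ≠ i := hja ▸ hJ1 a.val
  have hmem : ∀ t : ↥(Set.Ioo (0:ℝ) δ), J t = j → V t ∈ F i ∩ F j := by
    intro t ht
    constructor
    · exact (hFmem i (V t)).mpr ⟨hJ3 t, hJ4 t⟩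
    · refine (hFmem j (V t)).mpr ⟨hJ3 t, ?_⟩
      rw [← ht]
      exact hJ5 t
  have := hnb j hji ⟨V a.val, V b.val, hvne, hmem a.val hja, hmem b.val hjb⟩
  have hneg : ⟪ν j, d⟫ < 0 := hja ▸ hJ2 a.val
  linarith
end

section
/- Let S² be covered by four fixed open hemispheres H₁, H₂, H₃, H₄ and let 𝓕 be a family of open hemispheres covering S². Then there exists a subfamily of 𝓕 of size at most 12 covering S². -/
open scoped RealInnerProductSpace
open Module Finset

/-- Three-hemisphere covering lemma: if a finite family of open hemispheres covers the
sphere, then the open hemisphere of `wk` is covered by at most 3 of them. -/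
lemma three_cover_half {ι : Type*} (wk : EuclideanSpace ℝ (Fin 3)) (hwk : wk ≠ 0)
    (ν : ι → EuclideanSpace ℝ (Fin 3)) (s : Finset ι)
    (hs : ∀ x : EuclideanSpace ℝ (Fin 3), ‖x‖ = 1 → ∃ i ∈ s, ⟪ν i, x⟫ < 0) :
    ∃ I : Finset ι, I ⊆ s ∧ I.card ≤ 3 ∧
      ∀ x : EuclideanSpace ℝ (Fin 3), ‖x‖ = 1 → ⟪wk, x⟫ < 0 → ∃ i ∈ I, ⟪ν i, x⟫ < 0 := by
  classical
  set V := (ℝ ∙ wk)ᗮ with hV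
  set c : EuclideanSpace ℝ (Fin 3) := (-(‖wk‖ ^ 2)⁻¹ : ℝ) • wk with hc
  have hwk0 : ‖wk‖ ≠ 0 := norm_ne_zero_iff.mpr hwk
  have hcwk : ⟪wk, c⟫ = -1 := by
    rw [hc, real_inner_smul_right, real_inner_self_eq_norm_sq]
    field_simp
  have hfr : finrank ℝ V = 2 := by
    have h1 : finrank ℝ (ℝ ∙ wk) + finrank ℝ V = finrank ℝ (EuclideanSpace ℝ (Fin 3)) :=
      (ℝ ∙ wk).finrank_add_finrank_orthogonal
    rw [finrank_span_singleton hwk, finrank_euclideanSpace_fin] at h1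
    omega
  set F : ι → Set V := fun i => {v | 0 ≤ ⟪ν i, c + (v : EuclideanSpace ℝ (Fin 3))⟫} with hF
  have hconv : ∀ i ∈ s, Convex ℝ (F i) := by
    intro i _
    intro v hv u hu a b ha hb hab
    simp only [hF, Set.mem_setOf_eq] at hv hu ⊢
    have : (((a • v + b • u : V) : EuclideanSpace ℝ (Fin 3)))
        = a • (v : EuclideanSpace ℝ (Fin 3)) + b • (u : EuclideanSpace ℝ (Fin 3)) := by
      simp
    rw [this]
    have hcc : c + (a • (v : EuclideanSpace ℝ (Fin 3)) + b • (u : EuclideanSpace ℝ (Fin 3)))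
        = a • (c + v) + b • (c + u) := by
      have h1 : a • c + b • c = c := by rw [← add_smul, hab, one_smul]
      rw [smul_add, smul_add]
      nth_rewrite 1 [← h1]
      abel
    rw [hcc, inner_add_right, real_inner_smul_right, real_inner_smul_right]
    nlinarith
  have hempty : (⋂ i ∈ s, F i) = ∅ := by
    rw [Set.eq_empty_iff_forall_notMem]
    intro v hv
    set y : EuclideanSpace ℝ (Fin 3) := c + v with hy
    have hvperp : ⟪wk, (v : EuclideanSpace ℝ (Fin 3))⟫ = 0 :=
      Submodule.mem_orthogonal_singleton_iff_inner_right.mp v.2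
    have hwy : ⟪wk, y⟫ = -1 := by rw [hy, inner_add_right, hcwk, hvperp]; ring
    have hy0 : y ≠ 0 := by
      intro h; rw [h, inner_zero_right] at hwy; norm_num at hwy
    have hyn : ‖y‖ ≠ 0 := norm_ne_zero_iff.mpr hy0
    obtain ⟨i, hi, hlt⟩ := hs (‖y‖⁻¹ • y) (by rw [norm_smul]; simp [abs_of_nonneg, hyn])
    rw [real_inner_smul_right] at hlt
    have hyi : ⟪ν i, y⟫ < 0 := by
      have hpos : (0:ℝ) < ‖y‖⁻¹ := by positivity
      nlinarith
    have := Set.mem_iInter₂.mp hv i hi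
    simp only [hF, Set.mem_setOf_eq, ← hy] at this
    linarith
  have hnot : ¬ (∀ I ⊆ s, I.card ≤ finrank ℝ V + 1 → (⋂ i ∈ I, F i).Nonempty) := by
    intro h
    have := Convex.helly_theorem' hconv h
    rw [hempty] at this
    exact Set.not_nonempty_empty this
  push_neg at hnot
  obtain ⟨I, hIs, hIcard, hIe⟩ := hnot
  rw [hfr] at hIcard
  refine ⟨I, hIs, hIcard, ?_⟩
  intro x hx hxw
  obtain ⟨r, hr⟩ : ∃ r : ℝ, ⟪wk, x⟫ = r := ⟨_, rfl⟩
  rw [hr] at hxw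
  set t : ℝ := -r with ht
  have htpos : (0:ℝ) < t := by rw [ht]; linarith
  set y : EuclideanSpace ℝ (Fin 3) := t⁻¹ • x with hy
  have hwy : ⟪wk, y⟫ = -1 := by
    rw [hy, real_inner_smul_right, hr, ht]
    field_simp
    rw [div_self (ne_of_lt hxw)]
  have hvmem : y - c ∈ V := by
    rw [hV, Submodule.mem_orthogonal_singleton_iff_inner_right, inner_sub_right, hwy, hcwk]
    ring
  have hne : (⟨y - c, hvmem⟩ : V) ∉ ⋂ i ∈ I, F i := by
    rw [hIe]; exact Set.notMem_empty _
  rw [Set.mem_iInter₂] at hne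
  push_neg at hne
  obtain ⟨i, hiI, hi⟩ := hne
  simp only [hF, Set.mem_setOf_eq, not_le] at hi
  have hyi : ⟪ν i, y⟫ < 0 := by
    have : c + (y - c) = y := by abel
    rwa [this] at hi
  refine ⟨i, hiI, ?_⟩
  have : ⟪ν i, x⟫ = t * ⟪ν i, y⟫ := by
    rw [hy, real_inner_smul_right, ← mul_assoc, mul_inv_cancel₀ (ne_of_gt htpos), one_mul]
  rw [this]
  exact mul_neg_of_pos_of_neg htpos hyi

/-- If S² is covered by four fixed open hemispheres and also by a
family of open hemispheres, then some subfamily of size at most 12 covers S². -/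
theorem twelve_hemispheres_cover {ι : Type*}
    (w : Fin 4 → EuclideanSpace ℝ (Fin 3)) (hw : ∀ k, w k ≠ 0)
    (hWcover : ∀ x : EuclideanSpace ℝ (Fin 3), ‖x‖ = 1 → ∃ k, ⟪w k, x⟫ < 0)
    (ν : ι → EuclideanSpace ℝ (Fin 3)) (hν : ∀ i, ν i ≠ 0)
    (hcover : ∀ x : EuclideanSpace ℝ (Fin 3), ‖x‖ = 1 → ∃ i, ⟪ν i, x⟫ < 0) :
    ∃ S : Finset ι, S.card ≤ 12 ∧
      ∀ x : EuclideanSpace ℝ (Fin 3), ‖x‖ = 1 → ∃ i ∈ S, ⟪ν i, x⟫ < 0 := by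
  classical
  -- compactness: finite subcover
  have hcpt : IsCompact (Metric.sphere (0 : EuclideanSpace ℝ (Fin 3)) 1) :=
    isCompact_sphere 0 1
  have hopen : ∀ i, IsOpen {x : EuclideanSpace ℝ (Fin 3) | ⟪ν i, x⟫ < 0} := fun i =>
    isOpen_lt (continuous_const.inner continuous_id) continuous_const
  have hsub : Metric.sphere (0 : EuclideanSpace ℝ (Fin 3)) 1 ⊆
      ⋃ i, {x : EuclideanSpace ℝ (Fin 3) | ⟪ν i, x⟫ < 0} := by
    intro x hx
    obtain ⟨i, hi⟩ := hcover x (by simpa using hx)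
    exact Set.mem_iUnion.mpr ⟨i, hi⟩
  obtain ⟨s, hs⟩ := hcpt.elim_finite_subcover _ hopen hsub
  have hsc : ∀ x : EuclideanSpace ℝ (Fin 3), ‖x‖ = 1 → ∃ i ∈ s, ⟪ν i, x⟫ < 0 := by
    intro x hx
    have := hs (by simpa [mem_sphere_iff_norm] using hx : x ∈ Metric.sphere (0:EuclideanSpace ℝ (Fin 3)) 1)
    simpa using this
  choose I hIs hIcard hIcov using fun k => three_cover_half (w k) (hw k) ν s hsc
  refine ⟨(Finset.univ : Finset (Fin 4)).biUnion I, ?_, ?_⟩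
  · calc ((Finset.univ : Finset (Fin 4)).biUnion I).card
        ≤ ∑ k, (I k).card := Finset.card_biUnion_le
      _ ≤ ∑ _k : Fin 4, 3 := Finset.sum_le_sum (fun k _ => hIcard k)
      _ = 12 := by simp
  · intro x hx
    obtain ⟨k, hk⟩ := hWcover x hx
    obtain ⟨i, hiI, hilt⟩ := hIcov k x hx hk
    exact ⟨i, Finset.mem_biUnion.mpr ⟨k, Finset.mem_univ k, hiI⟩, hilt⟩
end
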